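/- Let C be a parsummable category and φ : {1,2} × ℕ → ℕ an injection. Then the functor φ_* : C × C → C, together with the unit object 0, the associativity isomorphism α_{x,y,z}, the symmetry isomorphism τ_{x,y}, the right unit isomorphism ρ_x = [φ¹,1]^x : x → φ_*(x,0) and the left unit isomorphism [φ²,1]^x : x → φ_*(0,x), makes the underlying category of C into a symmetric monoidal category with unit object 0: the pentagon coherence axiom holds for α, the unit coherence axiom holds, the hexagon axiom relating α and τ holds, and τ_{y,x} ∘ τ_{x,y} = id for all objects x, y. -/

import Mathlib

open CategoryTheory

/-- The monoid of injective self-maps of `U`, under composition. -/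
def Minj (U : Type*) : Submonoid (Function.End U) where
  carrier := {f | Function.Injective f}
  mul_mem' := fun hf hg => hf.comp hg
  one_mem' := Function.injective_id

instance (U : Type*) : FunLike (Minj U) U U where
  coe u := u.1
  coe_injective := fun _ _ h => Subtype.ext h

@[simp] lemma Minj.mul_apply {U : Type*} (u v : Minj U) (a : U) : (u * v) a = u (v a) := rfl

/-- `x` is supported on `A` if every injection fixing `A` elementwise fixes `x`. -/
def Supported {U : Type*} {X : Type*} [MulAction (Minj U) X] (A : Set U) (x : X) : Prop :=
  ∀ u : Minj U, (∀ a ∈ A, u a = a) → u • x = x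

/-- `x` is finitely supported if it is supported on some finite subset of `U`. -/
def FinSupported {U : Type*} {X : Type*} [MulAction (Minj U) X] (x : X) : Prop :=
  ∃ A : Finset U, Supported (A : Set U) x

/-- The support of `x`: the intersection of all finite subsets of `U` on which `x`
is supported. -/
def supp {U : Type*} {X : Type*} [MulAction (Minj U) X] (x : X) : Set U :=
  {i : U | ∀ A : Finset U, Supported (A : Set U) x → i ∈ A}

/-- An `M(U)`-category: a category with an action of the injection monoid on objects,
together with coherent isomorphisms `ι u x : x ≅ u • x`. The action of `u` on morphisms
is then given by conjugation with these isomorphisms. -/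
structure MCat (U : Type*) (C : Type*) [Category C] [MulAction (Minj U) C] where
  ι : ∀ (u : Minj U) (x : C), x ≅ u • x
  ι_mul : ∀ (u v : Minj U) (x : C),
    (ι u x).hom ≫ (ι v (u • x)).hom = (ι (v * u) x).hom ≫ eqToHom (mul_smul v u x)

namespace MCat

variable {U : Type*} {C : Type*} [Category C] [MulAction (Minj U) C]

/-- The action `u_*` of an injection on morphisms: `u_*(f) = ι(u,y) ∘ f ∘ ι(u,x)⁻¹`. -/
def act (h : MCat U C) (u : Minj U) {x y : C} (f : x ⟶ y) : u • x ⟶ u • y :=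
  (h.ι u x).inv ≫ f ≫ (h.ι u y).hom

/-- The natural isomorphism `[v,u]^x := ι(v,x) ∘ ι(u,x)⁻¹ : u • x ⟶ v • x`. -/
def tw (h : MCat U C) (v u : Minj U) (x : C) : u • x ⟶ v • x :=
  (h.ι u x).inv ≫ (h.ι v x).hom

@[simp] lemma act_id (h : MCat U C) (u : Minj U) (x : C) : h.act u (𝟙 x) = 𝟙 (u • x) := by
  simp [act]

@[simp] lemma act_comp (h : MCat U C) (u : Minj U) {x y z : C} (f : x ⟶ y) (g : y ⟶ z) :
    h.act u (f ≫ g) = h.act u f ≫ h.act u g := by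
  simp [act]

lemma ι_natural (h : MCat U C) (u : Minj U) {x y : C} (f : x ⟶ y) :
    (h.ι u x).hom ≫ h.act u f = f ≫ (h.ι u y).hom := by
  simp [act]

end MCat

section ExtensionLemma

/-- Any map that is injective on a finite subset of `ℕ` agrees on that subset with a
permutation of `ℕ`. -/
lemma exists_perm_extend (s : Finset ℕ) (f : ℕ → ℕ) (hf : Set.InjOn f ↑s) :
    ∃ e : Equiv.Perm ℕ, ∀ a ∈ s, e a = f a := by
  classical
  have hSfin : (↑s : Set ℕ).Finite := s.finite_toSet
  have hTfin : (f '' ↑s).Finite := hSfin.image f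
  haveI : Infinite ↥(↑s : Set ℕ)ᶜ := hSfin.infinite_compl.to_subtype
  haveI : Infinite ↥(f '' ↑s)ᶜ := hTfin.infinite_compl.to_subtype
  obtain ⟨e₂⟩ : Nonempty (↥(↑s : Set ℕ)ᶜ ≃ ↥(f '' ↑s)ᶜ) := nonempty_equiv_of_countable
  let e₁ : ↥(↑s : Set ℕ) ≃ ↥(f '' ↑s) := Equiv.Set.imageOfInjOn f ↑s hf
  refine ⟨(Equiv.Set.sumCompl (↑s : Set ℕ)).symm.trans
    ((e₁.sumCongr e₂).trans (Equiv.Set.sumCompl (f '' ↑s))), fun a ha => ?_⟩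
  have ha' : a ∈ (↑s : Set ℕ) := ha
  have h3 : (Equiv.Set.sumCompl (↑s : Set ℕ)).symm a = Sum.inl ⟨a, ha'⟩ :=
    Equiv.Set.sumCompl_symm_apply_of_mem ha'
  simp only [Equiv.trans_apply, h3, Equiv.sumCongr_apply, Sum.map_inl,
    Equiv.Set.sumCompl_apply_inl]
  rfl

variable {X : Type*} [MulAction (Minj ℕ) X]

/-- Two injections agreeing on a finite supporting set act in the same way. -/
lemma smul_eq_smul_of_eqOn {x : X} {A : Finset ℕ}
    (hA : Supported (A : Set ℕ) x) {v w : Minj ℕ} (hvw : ∀ a ∈ A, v a = w a) :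
    v • x = w • x := by
  classical
  set f : ℕ → ℕ := fun b => if hb : b ∈ A.image ⇑v then (Finset.mem_image.mp hb).choose else b
    with hfdef
  have hspec : ∀ b ∈ A.image ⇑v, f b ∈ A ∧ v (f b) = b := by
    intro b hb
    have h1 := (Finset.mem_image.mp hb).choose_spec
    simp only [hfdef, dif_pos hb]
    exact h1
  have hinj : Set.InjOn f ↑(A.image ⇑v) := by
    intro b₁ hb₁ b₂ hb₂ hb
    have h1 := hspec b₁ hb₁
    have h2 := hspec b₂ hb₂
    rw [← h1.2, ← h2.2, hb]
  obtain ⟨e, he⟩ := exists_perm_extend (A.image ⇑v) f hinj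
  have heva : ∀ a ∈ A, e (v a) = a := by
    intro a ha
    have hmem : v a ∈ A.image ⇑v := Finset.mem_image_of_mem _ ha
    have h1 := hspec _ hmem
    have : e (v a) = f (v a) := he _ hmem
    rw [this]
    exact v.2 h1.2
  let γ : Minj ℕ := ⟨(e : ℕ → ℕ), e.injective⟩
  let γ' : Minj ℕ := ⟨(e.symm : ℕ → ℕ), e.symm.injective⟩
  have hγ : γ' * γ = 1 := Subtype.ext (funext fun n => e.symm_apply_apply n)
  have h1 : (γ * v) • x = x := hA (γ * v) (fun a ha => heva a ha)
  have h2 : (γ * w) • x = x := hA (γ * w) (fun a ha => by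
    show e (w a) = a
    rw [← hvw a ha]
    exact heva a ha)
  calc v • x = ((γ' * γ) * v) • x := by rw [hγ, one_mul]
    _ = γ' • ((γ * v) • x) := by rw [mul_assoc, mul_smul γ' (γ * v) x]
    _ = γ' • ((γ * w) • x) := by rw [h1, h2]
    _ = ((γ' * γ) * w) • x := by rw [mul_assoc, mul_smul γ' (γ * w) x]
    _ = w • x := by rw [hγ, one_mul]

/-- If `x` is supported on the finite set `A`, then `w • x` is supported on `w(A)`. -/
lemma supported_image {x : X} {A : Finset ℕ}
    (hA : Supported (A : Set ℕ) x) (w : Minj ℕ) :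
    Supported ((A.image ⇑w : Finset ℕ) : Set ℕ) (w • x) := by
  intro u hu
  rw [← mul_smul]
  exact smul_eq_smul_of_eqOn hA (fun a ha => hu (w a) (by
    exact_mod_cast Finset.mem_image_of_mem _ ha))

lemma supp_subset_of_supported {x : X} {A : Finset ℕ}
    (hA : Supported (A : Set ℕ) x) : supp (U := ℕ) x ⊆ ↑A :=
  fun _ hi => hi A hA

end ExtensionLemma

/-- Two elements are disjointly supported if their supports are disjoint. -/
def DisjSupp {X : Type*} [MulAction (Minj ℕ) X] (x y : X) : Prop :=
  Disjoint (supp (U := ℕ) x) (supp (U := ℕ) y)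

/-- A parsummable category: a tame `M(ℕ)`-category together with a distinguished object `0`
supported on the empty set and a sum operation, defined on disjointly supported objects and
morphisms, which is strictly unital, associative and commutative and strictly commutes with
the `M(ℕ)`-action. -/
structure ParSum (C : Type*) [Category C] [MulAction (Minj ℕ) C] extends MCat ℕ C where
  tame : ∀ x : C, FinSupported (U := ℕ) x
  zero : C
  supp_zero : Supported (∅ : Set ℕ) zero
  add : C → C → C
  addHom : ∀ {x x' y y' : C}, DisjSupp x x' → DisjSupp y y' →
    (x ⟶ y) → (x' ⟶ y') → (add x x' ⟶ add y y')
  addHom_id : ∀ {x x' : C} (h : DisjSupp x x'), addHom h h (𝟙 x) (𝟙 x') = 𝟙 (add x x')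
  addHom_comp : ∀ {x y z x' y' z' : C} (hx : DisjSupp x x') (hy : DisjSupp y y')
    (hz : DisjSupp z z') (f : x ⟶ y) (g : y ⟶ z) (f' : x' ⟶ y') (g' : y' ⟶ z'),
    addHom hx hz (f ≫ g) (f' ≫ g') = addHom hx hy f f' ≫ addHom hy hz g g'
  add_zero' : ∀ x : C, add x zero = x
  zero_add' : ∀ x : C, add zero x = x
  addHom_zero : ∀ {x y : C} (hx : DisjSupp x zero) (hy : DisjSupp y zero) (f : x ⟶ y),
    addHom hx hy f (𝟙 zero) = eqToHom (add_zero' x) ≫ f ≫ eqToHom (add_zero' y).symm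
  zero_addHom : ∀ {x y : C} (hx : DisjSupp zero x) (hy : DisjSupp zero y) (f : x ⟶ y),
    addHom hx hy (𝟙 zero) f = eqToHom (zero_add' x) ≫ f ≫ eqToHom (zero_add' y).symm
  add_comm' : ∀ {x y : C}, DisjSupp x y → add x y = add y x
  addHom_comm : ∀ {x y x' y' : C} (hx : DisjSupp x x') (hy : DisjSupp y y')
    (hx' : DisjSupp x' x) (hy' : DisjSupp y' y) (f : x ⟶ y) (f' : x' ⟶ y'),
    addHom hx' hy' f' f = eqToHom (add_comm' hx).symm ≫ addHom hx hy f f' ≫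
      eqToHom (add_comm' hy)
  add_assoc' : ∀ {x y z : C}, DisjSupp x y → DisjSupp y z → DisjSupp x z →
    add (add x y) z = add x (add y z)
  addHom_assoc : ∀ {x y z x' y' z' : C}
    (hxy : DisjSupp x y) (hyz : DisjSupp y z) (hxz : DisjSupp x z)
    (hxy' : DisjSupp x' y') (hyz' : DisjSupp y' z') (hxz' : DisjSupp x' z')
    (hs : DisjSupp (add x y) z) (hs' : DisjSupp (add x' y') z')
    (ht : DisjSupp x (add y z)) (ht' : DisjSupp x' (add y' z'))
    (f : x ⟶ x') (g : y ⟶ y') (k : z ⟶ z'),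
    addHom hs hs' (addHom hxy hxy' f g) k =
      eqToHom (add_assoc' hxy hyz hxz) ≫ addHom ht ht' f (addHom hyz hyz' g k) ≫
        eqToHom (add_assoc' hxy' hyz' hxz').symm
  smul_add : ∀ (u : Minj ℕ) {x y : C}, DisjSupp x y → u • add x y = add (u • x) (u • y)
  act_add : ∀ (u : Minj ℕ) {x x' y y' : C} (hx : DisjSupp x x') (hy : DisjSupp y y')
    (hux : DisjSupp (u • x) (u • x')) (huy : DisjSupp (u • y) (u • y'))
    (f : x ⟶ y) (f' : x' ⟶ y'),
    toMCat.act u (addHom hx hy f f') =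
      eqToHom (smul_add u hx) ≫ addHom hux huy (toMCat.act u f) (toMCat.act u f') ≫
        eqToHom (smul_add u hy).symm
  ι_add : ∀ (u : Minj ℕ) {x y : C} (hxy : DisjSupp x y) (hu : DisjSupp (u • x) (u • y)),
    (toMCat.ι u (add x y)).hom =
      addHom hxy hu (toMCat.ι u x).hom (toMCat.ι u y).hom ≫ eqToHom (smul_add u hxy).symm

section Phi

variable {C : Type*} [Category C] [MulAction (Minj ℕ) C]

/-- The component `φ^i = φ(i,-)` of an injection `φ : {1,2} × ℕ → ℕ`, as an element
of `M(ℕ)`. -/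
def phiC (φ : Fin 2 × ℕ → ℕ) (hφ : Function.Injective φ) (i : Fin 2) : Minj ℕ :=
  ⟨fun n => φ (i, n), fun _ _ hab => congrArg Prod.snd (hφ hab)⟩

lemma disjoint_phiC_ranges (φ : Fin 2 × ℕ → ℕ) (hφ : Function.Injective φ) :
    Disjoint (Set.range ⇑(phiC φ hφ 0)) (Set.range ⇑(phiC φ hφ 1)) := by
  rw [Set.disjoint_left]
  rintro b ⟨n, rfl⟩ ⟨m, hm⟩
  have h1 : (1 : Fin 2) = 0 := congrArg Prod.fst (hφ hm)
  exact absurd h1 (by decide)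

lemma range_mul_subset (u v : Minj ℕ) : Set.range ⇑(u * v) ⊆ Set.range ⇑u := by
  rintro b ⟨a, rfl⟩
  exact ⟨v a, rfl⟩

lemma range_mul_disjoint (u : Minj ℕ) {v w : Minj ℕ}
    (hd : Disjoint (Set.range ⇑v) (Set.range ⇑w)) :
    Disjoint (Set.range ⇑(u * v)) (Set.range ⇑(u * w)) := by
  rw [Set.disjoint_left] at hd ⊢
  rintro b ⟨a, rfl⟩ ⟨a', ha'⟩
  exact hd ⟨a, rfl⟩ ⟨a', u.2 ha'⟩

namespace ParSum

lemma supp_smul_subset (h : ParSum C) (w : Minj ℕ) (x : C) :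
    supp (U := ℕ) (w • x) ⊆ Set.range ⇑w := by
  obtain ⟨A, hA⟩ := h.tame x
  intro i hi
  have := hi (A.image ⇑w) (supported_image hA w)
  obtain ⟨a, _, rfl⟩ := Finset.mem_image.mp this
  exact ⟨a, rfl⟩

/-- Objects moved into disjoint ranges are disjointly supported. -/
lemma disj_smul (h : ParSum C) {w w' : Minj ℕ}
    (hd : Disjoint (Set.range ⇑w) (Set.range ⇑w')) (x y : C) :
    DisjSupp (w • x) (w' • y) :=
  Disjoint.mono (h.supp_smul_subset w x) (h.supp_smul_subset w' y) hd

lemma supported_add_finset (h : ParSum C) {x y : C} (hd : DisjSupp x y) {A B : Finset ℕ}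
    (hx : Supported (A : Set ℕ) x) (hy : Supported (B : Set ℕ) y) :
    Supported ((A ∪ B : Finset ℕ) : Set ℕ) (h.add x y) := by
  intro u hu
  rw [h.smul_add u hd, hx u (fun a ha => hu a (by simp [ha])),
    hy u (fun a ha => hu a (by simp [ha]))]

lemma supp_add_subset (h : ParSum C) {x y : C} (hd : DisjSupp x y) :
    supp (U := ℕ) (h.add x y) ⊆ supp (U := ℕ) x ∪ supp (U := ℕ) y := by
  intro i hi
  by_contra hc
  simp only [Set.mem_union, not_or] at hc
  obtain ⟨hcx, hcy⟩ := hc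
  simp only [supp, Set.mem_setOf_eq, not_forall] at hcx hcy
  obtain ⟨A', hA', hiA'⟩ := hcx
  obtain ⟨B', hB', hiB'⟩ := hcy
  have := hi (A' ∪ B') (h.supported_add_finset hd hA' hB')
  simp only [Finset.mem_union] at this
  tauto

lemma supp_add_smul_subset (h : ParSum C) (u v : Minj ℕ)
    (hd : Disjoint (Set.range ⇑u) (Set.range ⇑v)) (x y : C) :
    supp (U := ℕ) (h.add (u • x) (v • y)) ⊆ Set.range ⇑u ∪ Set.range ⇑v := by
  intro i hi
  have := h.supp_add_subset (h.disj_smul hd x y) hi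
  rcases this with hl | hr
  · exact Or.inl (h.supp_smul_subset u x hl)
  · exact Or.inr (h.supp_smul_subset v y hr)

lemma smul_zero' (h : ParSum C) (u : Minj ℕ) : u • h.zero = h.zero :=
  h.supp_zero u (fun a ha => absurd ha (Set.notMem_empty a))

lemma supp_zero_subset (h : ParSum C) : supp (U := ℕ) h.zero ⊆ (∅ : Set ℕ) := by
  intro i hi
  have := hi ∅ (by intro u _; exact h.smul_zero' u)
  simp at this

lemma disj_zero_right (h : ParSum C) (x : C) : DisjSupp x h.zero :=
  Disjoint.mono_right h.supp_zero_subset (by simp)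

lemma disj_zero_left (h : ParSum C) (x : C) : DisjSupp h.zero x :=
  Disjoint.mono_left h.supp_zero_subset (by simp)

end ParSum

end Phi

section MonDefs

variable {C : Type*} [Category C] [MulAction (Minj ℕ) C]

/-- The tensor product `φ_*(x,y) = φ¹ • x + φ² • y` on objects. -/
def Fobj (h : ParSum C) (φ : Fin 2 × ℕ → ℕ) (hφ : Function.Injective φ) (x y : C) : C := h.add (phiC φ hφ 0 • x) (phiC φ hφ 1 • y)

lemma d12 (h : ParSum C) (φ : Fin 2 × ℕ → ℕ) (hφ : Function.Injective φ) (x y : C) : DisjSupp (phiC φ hφ 0 • x) (phiC φ hφ 1 • y) :=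
  h.disj_smul (disjoint_phiC_ranges φ hφ) x y

lemma d21 (h : ParSum C) (φ : Fin 2 × ℕ → ℕ) (hφ : Function.Injective φ) (x y : C) : DisjSupp (phiC φ hφ 1 • x) (phiC φ hφ 0 • y) :=
  h.disj_smul (disjoint_phiC_ranges φ hφ).symm x y

/-- The tensor product `φ_*(f,g) = φ¹_*(f) + φ²_*(g)` on morphisms. -/
def Fhom (h : ParSum C) (φ : Fin 2 × ℕ → ℕ) (hφ : Function.Injective φ) {x x' y y' : C} (f : x ⟶ x') (g : y ⟶ y') :
    Fobj h φ hφ x y ⟶ Fobj h φ hφ x' y' :=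
  h.addHom (d12 h φ hφ x y) (d12 h φ hφ x' y')
    (h.toMCat.act (phiC φ hφ 0) f) (h.toMCat.act (phiC φ hφ 1) g)

/-- The symmetry isomorphism `τ_{x,y} = [φ∘t, φ]^{x,y} : φ_*(x,y) ⟶ φ_*(y,x)`. -/
def braiding (h : ParSum C) (φ : Fin 2 × ℕ → ℕ) (hφ : Function.Injective φ) (x y : C) : Fobj h φ hφ x y ⟶ Fobj h φ hφ y x :=
  h.addHom (d12 h φ hφ x y) (d21 h φ hφ x y)
    (h.toMCat.tw (phiC φ hφ 1) (phiC φ hφ 0) x) (h.toMCat.tw (phiC φ hφ 0) (phiC φ hφ 1) y) ≫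
    eqToHom (h.add_comm' (d21 h φ hφ x y))

lemma zero_right_eq (h : ParSum C) (φ : Fin 2 × ℕ → ℕ) (hφ : Function.Injective φ) (x : C) : phiC φ hφ 0 • x = Fobj h φ hφ x h.zero := by
  show _ = h.add _ _
  rw [h.smul_zero' (phiC φ hφ 1), h.add_zero']

lemma zero_left_eq (h : ParSum C) (φ : Fin 2 × ℕ → ℕ) (hφ : Function.Injective φ) (x : C) : phiC φ hφ 1 • x = Fobj h φ hφ h.zero x := by
  show _ = h.add _ _
  rw [h.smul_zero' (phiC φ hφ 0), h.zero_add']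

/-- The right unit isomorphism `[φ¹,1]^x : x ⟶ φ_*(x,0)`. -/
def rightUnitor (h : ParSum C) (φ : Fin 2 × ℕ → ℕ) (hφ : Function.Injective φ) (x : C) : x ⟶ Fobj h φ hφ x h.zero :=
  eqToHom (one_smul (Minj ℕ) x).symm ≫ h.toMCat.tw (phiC φ hφ 0) 1 x ≫
    eqToHom (zero_right_eq h φ hφ x)

/-- The left unit isomorphism `[φ²,1]^x : x ⟶ φ_*(0,x)`. -/
def leftUnitor (h : ParSum C) (φ : Fin 2 × ℕ → ℕ) (hφ : Function.Injective φ) (x : C) : x ⟶ Fobj h φ hφ h.zero x :=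
  eqToHom (one_smul (Minj ℕ) x).symm ≫ h.toMCat.tw (phiC φ hφ 1) 1 x ≫
    eqToHom (zero_left_eq h φ hφ x)

lemma d00_01 (h : ParSum C) (φ : Fin 2 × ℕ → ℕ) (hφ : Function.Injective φ) (x y : C) :
    DisjSupp ((phiC φ hφ 0 * phiC φ hφ 0) • x) ((phiC φ hφ 0 * phiC φ hφ 1) • y) :=
  h.disj_smul (range_mul_disjoint _ (disjoint_phiC_ranges φ hφ)) x y

lemma d10_11 (h : ParSum C) (φ : Fin 2 × ℕ → ℕ) (hφ : Function.Injective φ) (y z : C) :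
    DisjSupp ((phiC φ hφ 1 * phiC φ hφ 0) • y) ((phiC φ hφ 1 * phiC φ hφ 1) • z) :=
  h.disj_smul (range_mul_disjoint _ (disjoint_phiC_ranges φ hφ)) y z

lemma d0_10 (h : ParSum C) (φ : Fin 2 × ℕ → ℕ) (hφ : Function.Injective φ) (x y : C) : DisjSupp (phiC φ hφ 0 • x) ((phiC φ hφ 1 * phiC φ hφ 0) • y) :=
  h.disj_smul (Disjoint.mono_right (range_mul_subset _ _) (disjoint_phiC_ranges φ hφ)) x y

lemma d0_11 (h : ParSum C) (φ : Fin 2 × ℕ → ℕ) (hφ : Function.Injective φ) (x z : C) : DisjSupp (phiC φ hφ 0 • x) ((phiC φ hφ 1 * phiC φ hφ 1) • z) :=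
  h.disj_smul (Disjoint.mono_right (range_mul_subset _ _) (disjoint_phiC_ranges φ hφ)) x z

lemma dI1 (h : ParSum C) (φ : Fin 2 × ℕ → ℕ) (hφ : Function.Injective φ) (x y z : C) :
    DisjSupp (h.add ((phiC φ hφ 0 * phiC φ hφ 0) • x) ((phiC φ hφ 0 * phiC φ hφ 1) • y))
      (phiC φ hφ 1 • z) := by
  have h1 : supp (U := ℕ)
      (h.add ((phiC φ hφ 0 * phiC φ hφ 0) • x) ((phiC φ hφ 0 * phiC φ hφ 1) • y)) ⊆
      Set.range ⇑(phiC φ hφ 0) := by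
    intro i hi
    rcases h.supp_add_smul_subset _ _ (range_mul_disjoint _ (disjoint_phiC_ranges φ hφ)) x y hi
      with h2 | h2
    · exact range_mul_subset _ _ h2
    · exact range_mul_subset _ _ h2
  exact Disjoint.mono h1 (h.supp_smul_subset _ z) (disjoint_phiC_ranges φ hφ)

lemma dI2 (h : ParSum C) (φ : Fin 2 × ℕ → ℕ) (hφ : Function.Injective φ) (x y z : C) :
    DisjSupp (h.add (phiC φ hφ 0 • x) ((phiC φ hφ 1 * phiC φ hφ 0) • y))
      ((phiC φ hφ 1 * phiC φ hφ 1) • z) := by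
  have h1 : supp (U := ℕ)
      (h.add (phiC φ hφ 0 • x) ((phiC φ hφ 1 * phiC φ hφ 0) • y)) ⊆
      Set.range ⇑(phiC φ hφ 0) ∪ Set.range ⇑(phiC φ hφ 1 * phiC φ hφ 0) := by
    intro i hi
    exact h.supp_add_smul_subset _ _
      (Disjoint.mono_right (range_mul_subset _ _) (disjoint_phiC_ranges φ hφ)) x y hi
  refine Disjoint.mono h1 (h.supp_smul_subset _ z) (Set.disjoint_union_left.mpr ⟨?_, ?_⟩)
  · exact Disjoint.mono_right (range_mul_subset _ _) (disjoint_phiC_ranges φ hφ)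
  · exact range_mul_disjoint _ (disjoint_phiC_ranges φ hφ)

lemma dI3 (h : ParSum C) (φ : Fin 2 × ℕ → ℕ) (hφ : Function.Injective φ) (x y z : C) :
    DisjSupp (phiC φ hφ 0 • x)
      (h.add ((phiC φ hφ 1 * phiC φ hφ 0) • y) ((phiC φ hφ 1 * phiC φ hφ 1) • z)) := by
  have h1 : supp (U := ℕ)
      (h.add ((phiC φ hφ 1 * phiC φ hφ 0) • y) ((phiC φ hφ 1 * phiC φ hφ 1) • z)) ⊆
      Set.range ⇑(phiC φ hφ 1) := by
    intro i hi
    rcases h.supp_add_smul_subset _ _ (range_mul_disjoint _ (disjoint_phiC_ranges φ hφ)) y z hi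
      with h2 | h2
    · exact range_mul_subset _ _ h2
    · exact range_mul_subset _ _ h2
  exact Disjoint.mono (h.supp_smul_subset _ x) h1 (disjoint_phiC_ranges φ hφ)

lemma assocSrc_eq (h : ParSum C) (φ : Fin 2 × ℕ → ℕ) (hφ : Function.Injective φ) (x y z : C) :
    Fobj h φ hφ (Fobj h φ hφ x y) z =
      h.add (h.add ((phiC φ hφ 0 * phiC φ hφ 0) • x) ((phiC φ hφ 0 * phiC φ hφ 1) • y))
        (phiC φ hφ 1 • z) := by
  show h.add (phiC φ hφ 0 • h.add (phiC φ hφ 0 • x) (phiC φ hφ 1 • y)) (phiC φ hφ 1 • z) = _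
  rw [h.smul_add (phiC φ hφ 0) (d12 h φ hφ x y), ← mul_smul, ← mul_smul]

lemma assocTgt_eq (h : ParSum C) (φ : Fin 2 × ℕ → ℕ) (hφ : Function.Injective φ) (x y z : C) :
    Fobj h φ hφ x (Fobj h φ hφ y z) =
      h.add (phiC φ hφ 0 • x)
        (h.add ((phiC φ hφ 1 * phiC φ hφ 0) • y) ((phiC φ hφ 1 * phiC φ hφ 1) • z)) := by
  show h.add (phiC φ hφ 0 • x) (phiC φ hφ 1 • h.add (phiC φ hφ 0 • y) (phiC φ hφ 1 • z)) = _
  rw [h.smul_add (phiC φ hφ 1) (d12 h φ hφ y z), ← mul_smul, ← mul_smul]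

lemma assocMid_eq (h : ParSum C) (φ : Fin 2 × ℕ → ℕ) (hφ : Function.Injective φ) (x y z : C) :
    h.add (h.add (phiC φ hφ 0 • x) ((phiC φ hφ 1 * phiC φ hφ 0) • y))
        ((phiC φ hφ 1 * phiC φ hφ 1) • z) =
      h.add (phiC φ hφ 0 • x)
        (h.add ((phiC φ hφ 1 * phiC φ hφ 0) • y) ((phiC φ hφ 1 * phiC φ hφ 1) • z)) :=
  h.add_assoc' (d0_10 h φ hφ x y) (d10_11 h φ hφ y z) (d0_11 h φ hφ x z)

/-- The associativity isomorphism
`α_{x,y,z} = [φ(1⊔φ), φ(φ⊔1)]^{x,y,z} : φ_*(φ_*(x,y),z) ⟶ φ_*(x,φ_*(y,z))`. -/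
def parAssociator (h : ParSum C) (φ : Fin 2 × ℕ → ℕ) (hφ : Function.Injective φ) (x y z : C) :
    Fobj h φ hφ (Fobj h φ hφ x y) z ⟶ Fobj h φ hφ x (Fobj h φ hφ y z) :=
  eqToHom (assocSrc_eq h φ hφ x y z) ≫
    h.addHom (dI1 h φ hφ x y z) (dI2 h φ hφ x y z)
      (h.addHom (d00_01 h φ hφ x y) (d0_10 h φ hφ x y)
        (h.toMCat.tw (phiC φ hφ 0) (phiC φ hφ 0 * phiC φ hφ 0) x)
        (h.toMCat.tw (phiC φ hφ 1 * phiC φ hφ 0) (phiC φ hφ 0 * phiC φ hφ 1) y))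
      (h.toMCat.tw (phiC φ hφ 1 * phiC φ hφ 1) (phiC φ hφ 1) z) ≫
    eqToHom ((assocMid_eq h φ hφ x y z).trans (assocTgt_eq h φ hφ x y z).symm)

end MonDefs

attribute [reducible] Fobj

section Toolkit

variable {C : Type*} [Category C] [MulAction (Minj ℕ) C]

/-- A twist morphism with recast endpoints. -/
def gtw (h : ParSum C) (v u : Minj ℕ) (x : C) {s t : C} (hs : s = u • x) (ht : t = v • x) :
    s ⟶ t :=
  eqToHom hs ≫ h.toMCat.tw v u x ≫ eqToHom ht.symm

lemma gtw_comp (h : ParSum C) {u v w : Minj ℕ} {x s m t : C}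
    (hs : s = u • x) (hm : m = v • x) (hm' : m = v • x) (ht : t = w • x) :
    gtw h v u x hs hm ≫ gtw h w v x hm' ht = gtw h w u x hs ht := by
  simp [gtw, MCat.tw]

lemma gtw_self (h : ParSum C) {u : Minj ℕ} {x s t : C} (hs : s = u • x) (ht : t = u • x) :
    gtw h u u x hs ht = eqToHom (hs.trans ht.symm) := by
  simp [gtw, MCat.tw]

lemma gtw_cast (h : ParSum C) {u u' v v' : Minj ℕ} (hu : u = u') (hv : v = v') {x s t : C}
    (hs : s = u • x) (ht : t = v • x) (hs' : s = u' • x) (ht' : t = v' • x) :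
    gtw h v u x hs ht = gtw h v' u' x hs' ht' := by subst hu; subst hv; rfl

lemma act_eqToHom (h : ParSum C) (u : Minj ℕ) {x y : C} (p : x = y) :
    h.toMCat.act u (eqToHom p) = eqToHom (show u • x = u • y by rw [p]) := by
  subst p; simp

lemma act_tw (h : ParSum C) (w v u : Minj ℕ) (x : C) :
    h.toMCat.act w (h.toMCat.tw v u x) =
      eqToHom (mul_smul w u x).symm ≫ h.toMCat.tw (w * v) (w * u) x ≫
        eqToHom (mul_smul w v x) := by
  have h1 := h.toMCat.ι_mul u w x
  have h2 := h.toMCat.ι_mul v w x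
  rw [← cancel_epi (h.toMCat.ι w (u • x)).hom, ← cancel_epi (h.toMCat.ι u x).hom]
  simp only [MCat.act, MCat.tw, Category.assoc, Iso.hom_inv_id_assoc]
  rw [reassoc_of% h1]
  simp only [eqToHom_trans_assoc, eqToHom_refl, Category.id_comp, Iso.hom_inv_id_assoc]
  exact h2

lemma act_gtw (h : ParSum C) (w : Minj ℕ) {u v : Minj ℕ} {x s t : C}
    (hs : s = u • x) (ht : t = v • x) :
    h.toMCat.act w (gtw h v u x hs ht) =
      gtw h (w * v) (w * u) x (show w • s = (w * u) • x by rw [hs, mul_smul])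
        (show w • t = (w * v) • x by rw [ht, mul_smul]) := by
  simp [gtw, act_eqToHom, act_tw]

lemma tw_eq_gtw (h : ParSum C) (v u : Minj ℕ) (x : C) :
    h.toMCat.tw v u x = gtw h v u x rfl rfl := by simp [gtw]

end Toolkit
section Toolkit2

variable {C : Type*} [Category C] [MulAction (Minj ℕ) C]

lemma iota_transport (h : ParSum C) (u : Minj ℕ) {w z : C} (q : w = z) :
    (h.toMCat.ι u w).hom =
      eqToHom q ≫ (h.toMCat.ι u z).hom ≫ eqToHom (show u • z = u • w by rw [q]) := by
  subst q; simp

lemma addHom_eqToHom (h : ParSum C) {x x' y y' : C} (hd : DisjSupp x x') (hd' : DisjSupp y y')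
    (p : x = y) (q : x' = y') :
    h.addHom hd hd' (eqToHom p) (eqToHom q) =
      eqToHom (show h.add x x' = h.add y y' by rw [p, q]) := by
  subst p; subst q; simp [h.addHom_id]

lemma add_endo_zero (h : ParSum C) (f g : h.zero ⟶ h.zero)
    (dz dz' : DisjSupp h.zero h.zero) :
    h.addHom dz dz' f g =
      eqToHom (h.add_zero' h.zero) ≫ f ≫ g ≫ eqToHom (h.add_zero' h.zero).symm := by
  calc h.addHom dz dz' f g = h.addHom dz dz' (f ≫ 𝟙 _) (𝟙 _ ≫ g) := by simp
    _ = h.addHom dz dz f (𝟙 _) ≫ h.addHom dz dz' (𝟙 _) g :=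
        h.addHom_comp dz dz dz' f (𝟙 _) (𝟙 _) g
    _ = _ := by
        rw [h.addHom_zero, h.zero_addHom]
        simp

lemma iota_zero (h : ParSum C) (u : Minj ℕ) :
    (h.toMCat.ι u h.zero).hom = eqToHom (h.smul_zero' u).symm := by
  have q : u • h.zero = h.zero := h.smul_zero' u
  have dz : DisjSupp h.zero h.zero := h.disj_zero_right h.zero
  have duz : DisjSupp (u • h.zero) (u • h.zero) := by rw [q]; exact dz
  have hadd : h.add h.zero h.zero = h.zero := h.add_zero' h.zero
  have e0 := h.ι_add u dz duz
  rw [iota_transport h u hadd] at e0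
  set κ : h.zero ⟶ h.zero := (h.toMCat.ι u h.zero).hom ≫ eqToHom q with hκdef
  have hκiso : IsIso κ := by rw [hκdef]; infer_instance
  have hdec : (h.toMCat.ι u h.zero).hom = κ ≫ eqToHom q.symm := by
    rw [hκdef]; simp
  have e1 : h.addHom dz duz (h.toMCat.ι u h.zero).hom (h.toMCat.ι u h.zero).hom
      = h.addHom dz dz κ κ ≫ h.addHom dz duz (eqToHom q.symm) (eqToHom q.symm) := by
    rw [← h.addHom_comp dz dz duz κ (eqToHom q.symm) κ (eqToHom q.symm)]
    congr 1 <;> rw [← hdec]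
  rw [e1, add_endo_zero h κ κ dz dz, addHom_eqToHom, hdec] at e0
  simp only [Category.assoc, eqToHom_trans] at e0
  have e2 : κ = κ ≫ κ := by
    have h5 := (cancel_epi (eqToHom hadd)).1 e0
    rw [← Category.assoc κ κ] at h5
    exact (cancel_mono _).1 h5
  have e3 : κ = 𝟙 h.zero := by
    have h6 : κ ≫ κ = κ ≫ 𝟙 h.zero := by simpa using e2.symm
    exact (cancel_epi κ).1 h6
  rw [hdec, e3]
  simp


end Toolkit2
section Toolkit3

variable {C : Type*} [Category C] [MulAction (Minj ℕ) C]

lemma iota_zero_inv (h : ParSum C) (u : Minj ℕ) :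
    (h.toMCat.ι u h.zero).inv = eqToHom (h.smul_zero' u) := by
  have : h.toMCat.ι u h.zero = eqToIso (h.smul_zero' u).symm :=
    Iso.ext (by rw [iota_zero]; rfl)
  rw [this]; rfl

lemma tw_zero (h : ParSum C) (v u : Minj ℕ) :
    h.toMCat.tw v u h.zero =
      eqToHom (show u • h.zero = v • h.zero by rw [h.smul_zero', h.smul_zero']) := by
  simp [MCat.tw, iota_zero, iota_zero_inv]

lemma gtw_zero (h : ParSum C) (v u : Minj ℕ) {s t : C} (hs : s = u • h.zero)
    (ht : t = v • h.zero) :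
    gtw h v u h.zero hs ht =
      eqToHom (show s = t by rw [hs, ht, h.smul_zero', h.smul_zero']) := by
  simp [gtw, tw_zero]

/-- A sum morphism with recast endpoints. -/
def gsum (h : ParSum C) {x x' y y' : C} (hd : DisjSupp x x') (hd' : DisjSupp y y')
    (f₁ : x ⟶ y) (f₂ : x' ⟶ y') {s t : C} (hs : s = h.add x x') (ht : t = h.add y y') :
    s ⟶ t :=
  eqToHom hs ≫ h.addHom hd hd' f₁ f₂ ≫ eqToHom ht.symm

lemma gsum_ext (h : ParSum C) {x x' y y' : C} (hd hd₂ : DisjSupp x x')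
    (hd' hd₂' : DisjSupp y y') (f₁ : x ⟶ y) (f₂ : x' ⟶ y') {s t : C}
    (hs hs₂ : s = h.add x x') (ht ht₂ : t = h.add y y') :
    gsum h hd hd' f₁ f₂ hs ht = gsum h hd₂ hd₂' f₁ f₂ hs₂ ht₂ := rfl

lemma gsum_comp (h : ParSum C) {x x' y y' z z' : C}
    (hd₁ : DisjSupp x x') (hd₂ hd₂' : DisjSupp y y') (hd₃ : DisjSupp z z')
    (f₁ : x ⟶ y) (f₂ : x' ⟶ y') (g₁ : y ⟶ z) (g₂ : y' ⟶ z') {s m t : C}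
    (hs : s = h.add x x') (hm hm' : m = h.add y y') (ht : t = h.add z z') :
    gsum h hd₁ hd₂ f₁ f₂ hs hm ≫ gsum h hd₂' hd₃ g₁ g₂ hm' ht =
      gsum h hd₁ hd₃ (f₁ ≫ g₁) (f₂ ≫ g₂) hs ht := by
  simp [gsum, h.addHom_comp hd₁ hd₂ hd₃ f₁ g₁ f₂ g₂]

lemma act_gsum (h : ParSum C) (w : Minj ℕ) {x x' y y' : C} (hd : DisjSupp x x')
    (hd' : DisjSupp y y') (hux : DisjSupp (w • x) (w • x')) (huy : DisjSupp (w • y) (w • y'))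
    (f₁ : x ⟶ y) (f₂ : x' ⟶ y') {s t : C} (hs : s = h.add x x') (ht : t = h.add y y') :
    h.toMCat.act w (gsum h hd hd' f₁ f₂ hs ht) =
      gsum h hux huy (h.toMCat.act w f₁) (h.toMCat.act w f₂)
        (show w • s = h.add (w • x) (w • x') by rw [hs, h.smul_add w hd])
        (show w • t = h.add (w • y) (w • y') by rw [ht, h.smul_add w hd']) := by
  simp [gsum, act_eqToHom, h.act_add w hd hd' hux huy f₁ f₂]

lemma gsum_eqToHom (h : ParSum C) {x x' y y' : C} (hd : DisjSupp x x') (hd' : DisjSupp y y')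
    (p : x = y) (q : x' = y') {s t : C} (hs : s = h.add x x') (ht : t = h.add y y') :
    gsum h hd hd' (eqToHom p) (eqToHom q) hs ht =
      eqToHom (show s = t by rw [hs, ht, p, q]) := by
  simp [gsum, addHom_eqToHom]

lemma gsum_comm (h : ParSum C) {x x' y y' : C} (hd : DisjSupp x x') (hd' : DisjSupp y y')
    (hdr : DisjSupp x' x) (hdr' : DisjSupp y' y)
    (f₁ : x ⟶ y) (f₂ : x' ⟶ y') {s t : C} (hs : s = h.add x x') (ht : t = h.add y y') :
    gsum h hd hd' f₁ f₂ hs ht =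
      gsum h hdr hdr' f₂ f₁ (hs.trans (h.add_comm' hd)) (ht.trans (h.add_comm' hd')) := by
  simp [gsum, h.addHom_comm hd hd' hdr hdr' f₁ f₂]

end Toolkit3
section Toolkit4

variable {C : Type*} [Category C] [MulAction (Minj ℕ) C]

lemma gsum_assoc (h : ParSum C) {x y z x' y' z' : C}
    (hxy : DisjSupp x y) (hyz : DisjSupp y z) (hxz : DisjSupp x z)
    (hxy' : DisjSupp x' y') (hyz' : DisjSupp y' z') (hxz' : DisjSupp x' z')
    (hl : DisjSupp (h.add x y) z) (hl' : DisjSupp (h.add x' y') z')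
    (hr : DisjSupp x (h.add y z)) (hr' : DisjSupp x' (h.add y' z'))
    (f : x ⟶ x') (g : y ⟶ y') (k : z ⟶ z') {s t : C}
    (hs : s = h.add (h.add x y) z) (ht : t = h.add (h.add x' y') z') :
    gsum h hl hl' (gsum h hxy hxy' f g rfl rfl) k hs ht =
      gsum h hr hr' f (gsum h hyz hyz' g k rfl rfl)
        (hs.trans (h.add_assoc' hxy hyz hxz)) (ht.trans (h.add_assoc' hxy' hyz' hxz')) := by
  simp [gsum, h.addHom_assoc hxy hyz hxz hxy' hyz' hxz' hl hl' hr hr' f g k]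

lemma gsum_repr_left (h : ParSum C) {x₁ y₁ x₁' y₁' x₂ y₂ : C} (px : x₁ = x₁') (py : y₁ = y₁')
    (f : x₁ ⟶ y₁) (f' : x₁' ⟶ y₁') (hf : f = eqToHom px ≫ f' ≫ eqToHom py.symm)
    (hd : DisjSupp x₁ x₂) (hd' : DisjSupp y₁ y₂) (hd₂ : DisjSupp x₁' x₂)
    (hd₂' : DisjSupp y₁' y₂) (g : x₂ ⟶ y₂) {s t : C}
    (hs : s = h.add x₁ x₂) (ht : t = h.add y₁ y₂) :
    gsum h hd hd' f g hs ht =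
      gsum h hd₂ hd₂' f' g (hs.trans (by rw [px])) (ht.trans (by rw [py])) := by
  subst px; subst py
  rw [hf]; simp

lemma gsum_repr_right (h : ParSum C) {x₁ y₁ x₂ y₂ x₂' y₂' : C} (px : x₂ = x₂') (py : y₂ = y₂')
    (g : x₂ ⟶ y₂) (g' : x₂' ⟶ y₂') (hg : g = eqToHom px ≫ g' ≫ eqToHom py.symm)
    (hd : DisjSupp x₁ x₂) (hd' : DisjSupp y₁ y₂) (hd₂ : DisjSupp x₁ x₂')
    (hd₂' : DisjSupp y₁ y₂') (f : x₁ ⟶ y₁) {s t : C}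
    (hs : s = h.add x₁ x₂) (ht : t = h.add y₁ y₂) :
    gsum h hd hd' f g hs ht =
      gsum h hd₂ hd₂' f g' (hs.trans (by rw [px])) (ht.trans (by rw [py])) := by
  subst px; subst py
  rw [hg]; simp

lemma gsum_zero_left (h : ParSum C) {x₁ y₁ x₂ y₂ : C} (hx : x₁ = h.zero) (hy : y₁ = h.zero)
    (f : x₁ ⟶ y₁) (hf : f = eqToHom (hx.trans hy.symm))
    (hd : DisjSupp x₁ x₂) (hd' : DisjSupp y₁ y₂) (g : x₂ ⟶ y₂) {s t : C}
    (hs : s = h.add x₁ x₂) (ht : t = h.add y₁ y₂) :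
    gsum h hd hd' f g hs ht =
      eqToHom (show s = x₂ by rw [hs, hx, h.zero_add']) ≫ g ≫
        eqToHom (show y₂ = t by rw [ht, hy, h.zero_add']) := by
  subst hx; subst hy
  have hf' : f = 𝟙 h.zero := by rw [hf]; simp
  rw [hf']
  simp [gsum, h.zero_addHom hd hd' g]

lemma gsum_zero_right (h : ParSum C) {x₁ y₁ x₂ y₂ : C} (hx : x₂ = h.zero) (hy : y₂ = h.zero)
    (g : x₂ ⟶ y₂) (hg : g = eqToHom (hx.trans hy.symm))
    (hd : DisjSupp x₁ x₂) (hd' : DisjSupp y₁ y₂) (f : x₁ ⟶ y₁) {s t : C}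
    (hs : s = h.add x₁ x₂) (ht : t = h.add y₁ y₂) :
    gsum h hd hd' f g hs ht =
      eqToHom (show s = x₁ by rw [hs, hx, h.add_zero']) ≫ f ≫
        eqToHom (show y₁ = t by rw [ht, hy, h.add_zero']) := by
  subst hx; subst hy
  have hg' : g = 𝟙 h.zero := by rw [hg]; simp
  rw [hg']
  simp [gsum, h.addHom_zero hd hd' f]

lemma gtw_add (h : ParSum C) (v u : Minj ℕ) {y z : C} (hd : DisjSupp y z)
    (hu : DisjSupp (u • y) (u • z)) (hv : DisjSupp (v • y) (v • z)) {s t : C}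
    (hs : s = u • h.add y z) (ht : t = v • h.add y z) :
    gtw h v u (h.add y z) hs ht =
      gsum h hu hv (gtw h v u y rfl rfl) (gtw h v u z rfl rfl)
        (hs.trans (h.smul_add u hd)) (ht.trans (h.smul_add v hd)) := by
  have core : h.toMCat.tw v u (h.add y z) =
      eqToHom (h.smul_add u hd) ≫
        h.addHom hu hv (h.toMCat.tw v u y) (h.toMCat.tw v u z) ≫
        eqToHom (h.smul_add v hd).symm := by
    rw [← cancel_epi (h.toMCat.ι u (h.add y z)).hom]
    have l1 : (h.toMCat.ι u (h.add y z)).hom ≫ h.toMCat.tw v u (h.add y z) =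
        (h.toMCat.ι v (h.add y z)).hom := by simp [MCat.tw]
    rw [l1, h.ι_add u hd hu]
    simp only [Category.assoc, eqToHom_trans_assoc, eqToHom_refl, Category.id_comp]
    rw [← Category.assoc,
      ← h.addHom_comp hd hu hv (h.toMCat.ι u y).hom (h.toMCat.tw v u y)
        (h.toMCat.ι u z).hom (h.toMCat.tw v u z)]
    have l2 : (h.toMCat.ι u y).hom ≫ h.toMCat.tw v u y = (h.toMCat.ι v y).hom := by
      simp [MCat.tw]
    have l3 : (h.toMCat.ι u z).hom ≫ h.toMCat.tw v u z = (h.toMCat.ι v z).hom := by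
      simp [MCat.tw]
    rw [l2, l3]
    exact h.ι_add v hd hv
  simp [gtw, gsum, core]

lemma gtw_smul (h : ParSum C) (v u w : Minj ℕ) (y : C) {s t : C}
    (hs : s = u • (w • y)) (ht : t = v • (w • y)) :
    gtw h v u (w • y) hs ht =
      gtw h (v * w) (u * w) y (hs.trans (mul_smul u w y).symm)
        (ht.trans (mul_smul v w y).symm) := by
  have core : h.toMCat.tw v u (w • y) =
      eqToHom (mul_smul u w y).symm ≫ h.toMCat.tw (v * w) (u * w) y ≫
        eqToHom (mul_smul v w y) := by
    rw [← cancel_epi (h.toMCat.ι u (w • y)).hom, ← cancel_epi (h.toMCat.ι w y).hom]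
    have l1 : (h.toMCat.ι u (w • y)).hom ≫ h.toMCat.tw v u (w • y) =
        (h.toMCat.ι v (w • y)).hom := by simp [MCat.tw]
    rw [l1, h.toMCat.ι_mul w v y]
    simp only [MCat.tw, Category.assoc]
    rw [reassoc_of% (h.toMCat.ι_mul w u y)]
    simp only [eqToHom_trans_assoc, eqToHom_refl, Category.id_comp, Iso.hom_inv_id_assoc]
  simp [gtw, core]

end Toolkit4
section Toolkit5

variable {C : Type*} [Category C] [MulAction (Minj ℕ) C]

/-- Pairwise disjointness of ranges. -/
abbrev rd2 (u v : Minj ℕ) : Prop := Disjoint (Set.range ⇑u) (Set.range ⇑v)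

abbrev rd3 (u₁ u₂ u₃ : Minj ℕ) : Prop := rd2 u₁ u₂ ∧ rd2 u₁ u₃ ∧ rd2 u₂ u₃

abbrev rd4 (u₁ u₂ u₃ u₄ : Minj ℕ) : Prop :=
  rd2 u₁ u₂ ∧ rd2 u₁ u₃ ∧ rd2 u₁ u₄ ∧ rd2 u₂ u₃ ∧ rd2 u₂ u₄ ∧ rd2 u₃ u₄

lemma rd2.symm {u v : Minj ℕ} (hd : rd2 u v) : rd2 v u := Disjoint.symm hd

lemma rd2_mul {u v : Minj ℕ} (hd : rd2 u v) (w w' : Minj ℕ) : rd2 (u * w) (v * w') :=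
  Disjoint.mono (range_mul_subset u w) (range_mul_subset v w') hd

lemma rd2_mul_left {u v : Minj ℕ} (hd : rd2 u v) (w : Minj ℕ) : rd2 (u * w) v :=
  Disjoint.mono_left (range_mul_subset u w) hd

lemma rd2_mul_right {u v : Minj ℕ} (hd : rd2 u v) (w : Minj ℕ) : rd2 u (v * w) :=
  Disjoint.mono_right (range_mul_subset v w) hd

lemma rd2_lmul {u v : Minj ℕ} (hd : rd2 u v) (w : Minj ℕ) : rd2 (w * u) (w * v) :=
  range_mul_disjoint w hd

lemma ds2 (h : ParSum C) {u v : Minj ℕ} (hd : rd2 u v) (x y : C) :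
    DisjSupp (u • x) (v • y) := h.disj_smul hd x y

lemma ds12 (h : ParSum C) {u₁ u₂ u₃ : Minj ℕ} (h12 : rd2 u₁ u₂) (h13 : rd2 u₁ u₃)
    (h23 : rd2 u₂ u₃) (x₁ x₂ x₃ : C) :
    DisjSupp (u₁ • x₁) (h.add (u₂ • x₂) (u₃ • x₃)) :=
  Disjoint.mono (h.supp_smul_subset u₁ x₁) (h.supp_add_smul_subset u₂ u₃ h23 x₂ x₃)
    (Set.disjoint_union_right.mpr ⟨h12, h13⟩)

lemma ds21 (h : ParSum C) {u₁ u₂ u₃ : Minj ℕ} (h12 : rd2 u₁ u₂) (h13 : rd2 u₁ u₃)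
    (h23 : rd2 u₂ u₃) (x₁ x₂ x₃ : C) :
    DisjSupp (h.add (u₁ • x₁) (u₂ • x₂)) (u₃ • x₃) :=
  Disjoint.mono (h.supp_add_smul_subset u₁ u₂ h12 x₁ x₂) (h.supp_smul_subset u₃ x₃)
    (Set.disjoint_union_left.mpr ⟨h13, h23⟩)

lemma supp3_subset (h : ParSum C) {u₂ u₃ u₄ : Minj ℕ} (h23 : rd2 u₂ u₃) (h24 : rd2 u₂ u₄)
    (h34 : rd2 u₃ u₄) (x₂ x₃ x₄ : C) :
    supp (U := ℕ) (h.add (u₂ • x₂) (h.add (u₃ • x₃) (u₄ • x₄))) ⊆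
      Set.range ⇑u₂ ∪ (Set.range ⇑u₃ ∪ Set.range ⇑u₄) := by
  intro i hi
  rcases h.supp_add_subset (ds12 h h23 h24 h34 x₂ x₃ x₄) hi with h1 | h1
  · exact Or.inl (h.supp_smul_subset _ _ h1)
  · exact Or.inr (h.supp_add_smul_subset _ _ h34 _ _ h1)

lemma ds13 (h : ParSum C) {u₁ u₂ u₃ u₄ : Minj ℕ} (hu : rd4 u₁ u₂ u₃ u₄) (x₁ x₂ x₃ x₄ : C) :
    DisjSupp (u₁ • x₁) (h.add (u₂ • x₂) (h.add (u₃ • x₃) (u₄ • x₄))) :=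
  Disjoint.mono (h.supp_smul_subset u₁ x₁)
    (supp3_subset h hu.2.2.2.1 hu.2.2.2.2.1 hu.2.2.2.2.2 x₂ x₃ x₄)
    (Set.disjoint_union_right.mpr ⟨hu.1, Set.disjoint_union_right.mpr ⟨hu.2.1, hu.2.2.1⟩⟩)

lemma ds22 (h : ParSum C) {u₁ u₂ u₃ u₄ : Minj ℕ} (hu : rd4 u₁ u₂ u₃ u₄) (x₁ x₂ x₃ x₄ : C) :
    DisjSupp (h.add (u₁ • x₁) (u₂ • x₂)) (h.add (u₃ • x₃) (u₄ • x₄)) :=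
  Disjoint.mono (h.supp_add_smul_subset u₁ u₂ hu.1 x₁ x₂)
    (h.supp_add_smul_subset u₃ u₄ hu.2.2.2.2.2 x₃ x₄)
    (Set.disjoint_union_left.mpr
      ⟨Set.disjoint_union_right.mpr ⟨hu.2.1, hu.2.2.1⟩,
       Set.disjoint_union_right.mpr ⟨hu.2.2.2.1, hu.2.2.2.2.1⟩⟩)

/-- Canonical binary form: a sum of two twists. -/
def cf2 (h : ParSum C) (u₁ v₁ u₂ v₂ : Minj ℕ) (x₁ x₂ : C) (hu : rd2 u₁ u₂) (hv : rd2 v₁ v₂)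
    {s t : C} (hs : s = h.add (u₁ • x₁) (u₂ • x₂)) (ht : t = h.add (v₁ • x₁) (v₂ • x₂)) :
    s ⟶ t :=
  gsum h (ds2 h hu x₁ x₂) (ds2 h hv x₁ x₂) (gtw h v₁ u₁ x₁ rfl rfl) (gtw h v₂ u₂ x₂ rfl rfl)
    hs ht

/-- Canonical ternary form. -/
def cf3 (h : ParSum C) (u₁ v₁ u₂ v₂ u₃ v₃ : Minj ℕ) (x₁ x₂ x₃ : C)
    (hu : rd3 u₁ u₂ u₃) (hv : rd3 v₁ v₂ v₃) {s t : C}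
    (hs : s = h.add (u₁ • x₁) (h.add (u₂ • x₂) (u₃ • x₃)))
    (ht : t = h.add (v₁ • x₁) (h.add (v₂ • x₂) (v₃ • x₃))) : s ⟶ t :=
  gsum h (ds12 h hu.1 hu.2.1 hu.2.2 x₁ x₂ x₃) (ds12 h hv.1 hv.2.1 hv.2.2 x₁ x₂ x₃)
    (gtw h v₁ u₁ x₁ rfl rfl) (cf2 h u₂ v₂ u₃ v₃ x₂ x₃ hu.2.2 hv.2.2 rfl rfl) hs ht

/-- Canonical quaternary form. -/
def cf4 (h : ParSum C) (u₁ v₁ u₂ v₂ u₃ v₃ u₄ v₄ : Minj ℕ) (x₁ x₂ x₃ x₄ : C)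
    (hu : rd4 u₁ u₂ u₃ u₄) (hv : rd4 v₁ v₂ v₃ v₄) {s t : C}
    (hs : s = h.add (u₁ • x₁) (h.add (u₂ • x₂) (h.add (u₃ • x₃) (u₄ • x₄))))
    (ht : t = h.add (v₁ • x₁) (h.add (v₂ • x₂) (h.add (v₃ • x₃) (v₄ • x₄)))) : s ⟶ t :=
  gsum h (ds13 h hu x₁ x₂ x₃ x₄) (ds13 h hv x₁ x₂ x₃ x₄)
    (gtw h v₁ u₁ x₁ rfl rfl)
    (cf3 h u₂ v₂ u₃ v₃ u₄ v₄ x₂ x₃ x₄ ⟨hu.2.2.2.1, hu.2.2.2.2.1, hu.2.2.2.2.2⟩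
      ⟨hv.2.2.2.1, hv.2.2.2.2.1, hv.2.2.2.2.2⟩ rfl rfl) hs ht

lemma gtw_pres (h : ParSum C) (v u : Minj ℕ) (x : C) {s t : C} (hs : s = u • x)
    (ht : t = v • x) :
    gtw h v u x hs ht = eqToHom hs ≫ gtw h v u x rfl rfl ≫ eqToHom ht.symm := by
  simp [gtw]

lemma gsum_pres (h : ParSum C) {x x' y y' : C} (hd : DisjSupp x x') (hd' : DisjSupp y y')
    (f₁ : x ⟶ y) (f₂ : x' ⟶ y') {s t : C} (hs : s = h.add x x') (ht : t = h.add y y') :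
    gsum h hd hd' f₁ f₂ hs ht = eqToHom hs ≫ gsum h hd hd' f₁ f₂ rfl rfl ≫ eqToHom ht.symm := by
  simp [gsum]

lemma cf2_comp (h : ParSum C) {u₁ v₁ w₁ u₂ v₂ w₂ : Minj ℕ} (x₁ x₂ : C)
    (hu : rd2 u₁ u₂) (hv hv' : rd2 v₁ v₂) (hw : rd2 w₁ w₂) {s m t : C}
    (hs : s = h.add (u₁ • x₁) (u₂ • x₂)) (hm hm' : m = h.add (v₁ • x₁) (v₂ • x₂))
    (ht : t = h.add (w₁ • x₁) (w₂ • x₂)) :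
    cf2 h u₁ v₁ u₂ v₂ x₁ x₂ hu hv hs hm ≫ cf2 h v₁ w₁ v₂ w₂ x₁ x₂ hv' hw hm' ht =
      cf2 h u₁ w₁ u₂ w₂ x₁ x₂ hu hw hs ht := by
  unfold cf2
  rw [gsum_comp, gtw_comp, gtw_comp]

lemma cf3_comp (h : ParSum C) {u₁ v₁ w₁ u₂ v₂ w₂ u₃ v₃ w₃ : Minj ℕ} (x₁ x₂ x₃ : C)
    (hu : rd3 u₁ u₂ u₃) (hv hv' : rd3 v₁ v₂ v₃) (hw : rd3 w₁ w₂ w₃) {s m t : C}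
    (hs : s = h.add (u₁ • x₁) (h.add (u₂ • x₂) (u₃ • x₃)))
    (hm hm' : m = h.add (v₁ • x₁) (h.add (v₂ • x₂) (v₃ • x₃)))
    (ht : t = h.add (w₁ • x₁) (h.add (w₂ • x₂) (w₃ • x₃))) :
    cf3 h u₁ v₁ u₂ v₂ u₃ v₃ x₁ x₂ x₃ hu hv hs hm ≫
        cf3 h v₁ w₁ v₂ w₂ v₃ w₃ x₁ x₂ x₃ hv' hw hm' ht =
      cf3 h u₁ w₁ u₂ w₂ u₃ w₃ x₁ x₂ x₃ hu hw hs ht := by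
  unfold cf3
  rw [gsum_comp, gtw_comp, cf2_comp]

lemma cf4_comp (h : ParSum C) {u₁ v₁ w₁ u₂ v₂ w₂ u₃ v₃ w₃ u₄ v₄ w₄ : Minj ℕ}
    (x₁ x₂ x₃ x₄ : C) (hu : rd4 u₁ u₂ u₃ u₄) (hv hv' : rd4 v₁ v₂ v₃ v₄)
    (hw : rd4 w₁ w₂ w₃ w₄) {s m t : C}
    (hs : s = h.add (u₁ • x₁) (h.add (u₂ • x₂) (h.add (u₃ • x₃) (u₄ • x₄))))
    (hm hm' : m = h.add (v₁ • x₁) (h.add (v₂ • x₂) (h.add (v₃ • x₃) (v₄ • x₄))))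
    (ht : t = h.add (w₁ • x₁) (h.add (w₂ • x₂) (h.add (w₃ • x₃) (w₄ • x₄)))) :
    cf4 h u₁ v₁ u₂ v₂ u₃ v₃ u₄ v₄ x₁ x₂ x₃ x₄ hu hv hs hm ≫
        cf4 h v₁ w₁ v₂ w₂ v₃ w₃ v₄ w₄ x₁ x₂ x₃ x₄ hv' hw hm' ht =
      cf4 h u₁ w₁ u₂ w₂ u₃ w₃ u₄ w₄ x₁ x₂ x₃ x₄ hu hw hs ht := by
  unfold cf4
  rw [gsum_comp, gtw_comp, cf3_comp]

lemma cf2_cast (h : ParSum C) {u₁ u₁' v₁ v₁' u₂ u₂' v₂ v₂' : Minj ℕ}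
    (e₁ : u₁ = u₁') (e₂ : v₁ = v₁') (e₃ : u₂ = u₂') (e₄ : v₂ = v₂') (x₁ x₂ : C)
    (hu : rd2 u₁ u₂) (hv : rd2 v₁ v₂) (hu' : rd2 u₁' u₂') (hv' : rd2 v₁' v₂') {s t : C}
    (hs : s = h.add (u₁ • x₁) (u₂ • x₂)) (ht : t = h.add (v₁ • x₁) (v₂ • x₂))
    (hs' : s = h.add (u₁' • x₁) (u₂' • x₂)) (ht' : t = h.add (v₁' • x₁) (v₂' • x₂)) :
    cf2 h u₁ v₁ u₂ v₂ x₁ x₂ hu hv hs ht = cf2 h u₁' v₁' u₂' v₂' x₁ x₂ hu' hv' hs' ht' := by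
  subst e₁; subst e₂; subst e₃; subst e₄; rfl

lemma cf3_cast (h : ParSum C) {u₁ u₁' v₁ v₁' u₂ u₂' v₂ v₂' u₃ u₃' v₃ v₃' : Minj ℕ}
    (e₁ : u₁ = u₁') (e₂ : v₁ = v₁') (e₃ : u₂ = u₂') (e₄ : v₂ = v₂')
    (e₅ : u₃ = u₃') (e₆ : v₃ = v₃') (x₁ x₂ x₃ : C)
    (hu : rd3 u₁ u₂ u₃) (hv : rd3 v₁ v₂ v₃) (hu' : rd3 u₁' u₂' u₃') (hv' : rd3 v₁' v₂' v₃')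
    {s t : C}
    (hs : s = h.add (u₁ • x₁) (h.add (u₂ • x₂) (u₃ • x₃)))
    (ht : t = h.add (v₁ • x₁) (h.add (v₂ • x₂) (v₃ • x₃)))
    (hs' : s = h.add (u₁' • x₁) (h.add (u₂' • x₂) (u₃' • x₃)))
    (ht' : t = h.add (v₁' • x₁) (h.add (v₂' • x₂) (v₃' • x₃))) :
    cf3 h u₁ v₁ u₂ v₂ u₃ v₃ x₁ x₂ x₃ hu hv hs ht =
      cf3 h u₁' v₁' u₂' v₂' u₃' v₃' x₁ x₂ x₃ hu' hv' hs' ht' := by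
  subst e₁; subst e₂; subst e₃; subst e₄; subst e₅; subst e₆; rfl

lemma cf4_cast (h : ParSum C) {u₁ u₁' v₁ v₁' u₂ u₂' v₂ v₂' u₃ u₃' v₃ v₃' u₄ u₄' v₄ v₄' : Minj ℕ}
    (e₁ : u₁ = u₁') (e₂ : v₁ = v₁') (e₃ : u₂ = u₂') (e₄ : v₂ = v₂')
    (e₅ : u₃ = u₃') (e₆ : v₃ = v₃') (e₇ : u₄ = u₄') (e₈ : v₄ = v₄') (x₁ x₂ x₃ x₄ : C)
    (hu : rd4 u₁ u₂ u₃ u₄) (hv : rd4 v₁ v₂ v₃ v₄)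
    (hu' : rd4 u₁' u₂' u₃' u₄') (hv' : rd4 v₁' v₂' v₃' v₄') {s t : C}
    (hs : s = h.add (u₁ • x₁) (h.add (u₂ • x₂) (h.add (u₃ • x₃) (u₄ • x₄))))
    (ht : t = h.add (v₁ • x₁) (h.add (v₂ • x₂) (h.add (v₃ • x₃) (v₄ • x₄))))
    (hs' : s = h.add (u₁' • x₁) (h.add (u₂' • x₂) (h.add (u₃' • x₃) (u₄' • x₄))))
    (ht' : t = h.add (v₁' • x₁) (h.add (v₂' • x₂) (h.add (v₃' • x₃) (v₄' • x₄)))) :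
    cf4 h u₁ v₁ u₂ v₂ u₃ v₃ u₄ v₄ x₁ x₂ x₃ x₄ hu hv hs ht =
      cf4 h u₁' v₁' u₂' v₂' u₃' v₃' u₄' v₄' x₁ x₂ x₃ x₄ hu' hv' hs' ht' := by
  subst e₁; subst e₂; subst e₃; subst e₄; subst e₅; subst e₆; subst e₇; subst e₈; rfl

end Toolkit5
section Toolkit6

variable {C : Type*} [Category C] [MulAction (Minj ℕ) C]

lemma gsum_conj (h : ParSum C) {x₁ x₂ y₁ y₂ x₁' y₁' x₂' y₂' : C}
    (hd : DisjSupp x₁ x₂) (hd' : DisjSupp y₁ y₂)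
    (hd₂ : DisjSupp x₁' x₂') (hd₂' : DisjSupp y₁' y₂')
    (p₁ : x₁ = x₁') (q₁ : y₁' = y₁) (p₂ : x₂ = x₂') (q₂ : y₂' = y₂)
    (f : x₁' ⟶ y₁') (g : x₂' ⟶ y₂') {s t : C}
    (hs : s = h.add x₁ x₂) (ht : t = h.add y₁ y₂) :
    gsum h hd hd' (eqToHom p₁ ≫ f ≫ eqToHom q₁) (eqToHom p₂ ≫ g ≫ eqToHom q₂) hs ht =
      gsum h hd₂ hd₂' f g (hs.trans (by rw [p₁, p₂])) (ht.trans (by rw [← q₁, ← q₂])) := by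
  subst p₁; subst p₂; subst q₁; subst q₂
  simp [gsum]

lemma id_gtw (h : ParSum C) (u : Minj ℕ) (x : C) : 𝟙 (u • x) = gtw h u u x rfl rfl := by
  rw [gtw_self]; simp

lemma cf2_id (h : ParSum C) (u₁ u₂ : Minj ℕ) (x₁ x₂ : C) (hu hu' : rd2 u₁ u₂) {s t : C}
    (hs : s = h.add (u₁ • x₁) (u₂ • x₂)) (ht : t = h.add (u₁ • x₁) (u₂ • x₂)) :
    cf2 h u₁ u₁ u₂ u₂ x₁ x₂ hu hu' hs ht = eqToHom (hs.trans ht.symm) := by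
  unfold cf2
  rw [gtw_self, gtw_self, gsum_eqToHom]

lemma cf2_pres (h : ParSum C) (u₁ v₁ u₂ v₂ : Minj ℕ) (x₁ x₂ : C) (hu : rd2 u₁ u₂)
    (hv : rd2 v₁ v₂) {s t : C} (hs : s = h.add (u₁ • x₁) (u₂ • x₂))
    (ht : t = h.add (v₁ • x₁) (v₂ • x₂)) :
    cf2 h u₁ v₁ u₂ v₂ x₁ x₂ hu hv hs ht =
      eqToHom hs ≫ cf2 h u₁ v₁ u₂ v₂ x₁ x₂ hu hv rfl rfl ≫ eqToHom ht.symm :=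
  gsum_pres h _ _ _ _ hs ht

lemma cf3_pres (h : ParSum C) (u₁ v₁ u₂ v₂ u₃ v₃ : Minj ℕ) (x₁ x₂ x₃ : C) (hu : rd3 u₁ u₂ u₃)
    (hv : rd3 v₁ v₂ v₃) {s t : C} (hs : s = h.add (u₁ • x₁) (h.add (u₂ • x₂) (u₃ • x₃)))
    (ht : t = h.add (v₁ • x₁) (h.add (v₂ • x₂) (v₃ • x₃))) :
    cf3 h u₁ v₁ u₂ v₂ u₃ v₃ x₁ x₂ x₃ hu hv hs ht =
      eqToHom hs ≫ cf3 h u₁ v₁ u₂ v₂ u₃ v₃ x₁ x₂ x₃ hu hv rfl rfl ≫ eqToHom ht.symm :=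
  gsum_pres h _ _ _ _ hs ht

lemma cf4_pres (h : ParSum C) (u₁ v₁ u₂ v₂ u₃ v₃ u₄ v₄ : Minj ℕ) (x₁ x₂ x₃ x₄ : C)
    (hu : rd4 u₁ u₂ u₃ u₄) (hv : rd4 v₁ v₂ v₃ v₄) {s t : C}
    (hs : s = h.add (u₁ • x₁) (h.add (u₂ • x₂) (h.add (u₃ • x₃) (u₄ • x₄))))
    (ht : t = h.add (v₁ • x₁) (h.add (v₂ • x₂) (h.add (v₃ • x₃) (v₄ • x₄)))) :
    cf4 h u₁ v₁ u₂ v₂ u₃ v₃ u₄ v₄ x₁ x₂ x₃ x₄ hu hv hs ht =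
      eqToHom hs ≫ cf4 h u₁ v₁ u₂ v₂ u₃ v₃ u₄ v₄ x₁ x₂ x₃ x₄ hu hv rfl rfl ≫
        eqToHom ht.symm :=
  gsum_pres h _ _ _ _ hs ht

lemma act_cf2 (h : ParSum C) (w : Minj ℕ) (u₁ v₁ u₂ v₂ : Minj ℕ) (x₁ x₂ : C)
    (hu : rd2 u₁ u₂) (hv : rd2 v₁ v₂) (hu' : rd2 (w * u₁) (w * u₂))
    (hv' : rd2 (w * v₁) (w * v₂)) {s t : C}
    (hs : s = h.add (u₁ • x₁) (u₂ • x₂)) (ht : t = h.add (v₁ • x₁) (v₂ • x₂)) :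
    h.toMCat.act w (cf2 h u₁ v₁ u₂ v₂ x₁ x₂ hu hv hs ht) =
      cf2 h (w * u₁) (w * v₁) (w * u₂) (w * v₂) x₁ x₂ hu' hv'
        (show w • s = h.add ((w * u₁) • x₁) ((w * u₂) • x₂) by
          rw [hs, h.smul_add w (ds2 h hu x₁ x₂), ← mul_smul, ← mul_smul])
        (show w • t = h.add ((w * v₁) • x₁) ((w * v₂) • x₂) by
          rw [ht, h.smul_add w (ds2 h hv x₁ x₂), ← mul_smul, ← mul_smul]) := by
  unfold cf2
  rw [act_gsum h w _ _
    (show DisjSupp (w • (u₁ • x₁)) (w • (u₂ • x₂)) by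
      rw [← mul_smul, ← mul_smul]; exact ds2 h hu' x₁ x₂)
    (show DisjSupp (w • (v₁ • x₁)) (w • (v₂ • x₂)) by
      rw [← mul_smul, ← mul_smul]; exact ds2 h hv' x₁ x₂),
    act_gtw, act_gtw,
    gtw_pres h (w * v₁) (w * u₁) x₁, gtw_pres h (w * v₂) (w * u₂) x₂,
    gsum_conj h _ _ (ds2 h hu' x₁ x₂) (ds2 h hv' x₁ x₂)]

end Toolkit6
section Toolkit7

variable {C : Type*} [Category C] [MulAction (Minj ℕ) C]

lemma act_cf3 (h : ParSum C) (w : Minj ℕ) (u₁ v₁ u₂ v₂ u₃ v₃ : Minj ℕ) (x₁ x₂ x₃ : C)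
    (hu : rd3 u₁ u₂ u₃) (hv : rd3 v₁ v₂ v₃) (hu' : rd3 (w * u₁) (w * u₂) (w * u₃))
    (hv' : rd3 (w * v₁) (w * v₂) (w * v₃)) {s t : C}
    (hs : s = h.add (u₁ • x₁) (h.add (u₂ • x₂) (u₃ • x₃)))
    (ht : t = h.add (v₁ • x₁) (h.add (v₂ • x₂) (v₃ • x₃))) :
    h.toMCat.act w (cf3 h u₁ v₁ u₂ v₂ u₃ v₃ x₁ x₂ x₃ hu hv hs ht) =
      cf3 h (w * u₁) (w * v₁) (w * u₂) (w * v₂) (w * u₃) (w * v₃) x₁ x₂ x₃ hu' hv'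
        (show w • s = h.add ((w * u₁) • x₁) (h.add ((w * u₂) • x₂) ((w * u₃) • x₃)) by
          rw [hs, h.smul_add w (ds12 h hu.1 hu.2.1 hu.2.2 x₁ x₂ x₃),
            h.smul_add w (ds2 h hu.2.2 x₂ x₃), ← mul_smul, ← mul_smul, ← mul_smul])
        (show w • t = h.add ((w * v₁) • x₁) (h.add ((w * v₂) • x₂) ((w * v₃) • x₃)) by
          rw [ht, h.smul_add w (ds12 h hv.1 hv.2.1 hv.2.2 x₁ x₂ x₃),
            h.smul_add w (ds2 h hv.2.2 x₂ x₃), ← mul_smul, ← mul_smul, ← mul_smul]) := by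
  unfold cf3
  rw [act_gsum h w _ _
    (show DisjSupp (w • (u₁ • x₁)) (w • (h.add (u₂ • x₂) (u₃ • x₃))) by
      rw [← mul_smul, h.smul_add w (ds2 h hu.2.2 x₂ x₃), ← mul_smul, ← mul_smul]
      exact ds12 h hu'.1 hu'.2.1 hu'.2.2 x₁ x₂ x₃)
    (show DisjSupp (w • (v₁ • x₁)) (w • (h.add (v₂ • x₂) (v₃ • x₃))) by
      rw [← mul_smul, h.smul_add w (ds2 h hv.2.2 x₂ x₃), ← mul_smul, ← mul_smul]
      exact ds12 h hv'.1 hv'.2.1 hv'.2.2 x₁ x₂ x₃),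
    act_gtw, act_cf2 h w u₂ v₂ u₃ v₃ x₂ x₃ hu.2.2 hv.2.2 hu'.2.2 hv'.2.2,
    gtw_pres h (w * v₁) (w * u₁) x₁, cf2_pres,
    gsum_conj h _ _ (ds12 h hu'.1 hu'.2.1 hu'.2.2 x₁ x₂ x₃)
      (ds12 h hv'.1 hv'.2.1 hv'.2.2 x₁ x₂ x₃)]

lemma ds31 (h : ParSum C) {u₁ u₂ u₃ u₄ : Minj ℕ} (hu : rd4 u₁ u₂ u₃ u₄) (x₁ x₂ x₃ x₄ : C) :
    DisjSupp (h.add (u₁ • x₁) (h.add (u₂ • x₂) (u₃ • x₃))) (u₄ • x₄) :=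
  Disjoint.mono (supp3_subset h hu.1 hu.2.1 hu.2.2.2.1 x₁ x₂ x₃) (h.supp_smul_subset u₄ x₄)
    (Set.disjoint_union_left.mpr ⟨hu.2.2.1,
      Set.disjoint_union_left.mpr ⟨hu.2.2.2.2.1, hu.2.2.2.2.2⟩⟩)

lemma suppL3_subset (h : ParSum C) {u₁ u₂ u₃ : Minj ℕ} (h12 : rd2 u₁ u₂) (h13 : rd2 u₁ u₃)
    (h23 : rd2 u₂ u₃) (x₁ x₂ x₃ : C) :
    supp (U := ℕ) (h.add (h.add (u₁ • x₁) (u₂ • x₂)) (u₃ • x₃)) ⊆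
      (Set.range ⇑u₁ ∪ Set.range ⇑u₂) ∪ Set.range ⇑u₃ := by
  intro i hi
  rcases h.supp_add_subset (ds21 h h12 h13 h23 x₁ x₂ x₃) hi with h1 | h1
  · exact Or.inl (h.supp_add_smul_subset _ _ h12 _ _ h1)
  · exact Or.inr (h.supp_smul_subset _ _ h1)

lemma ds13L (h : ParSum C) {u₁ u₂ u₃ u₄ : Minj ℕ} (hu : rd4 u₁ u₂ u₃ u₄) (x₁ x₂ x₃ x₄ : C) :
    DisjSupp (u₁ • x₁) (h.add (h.add (u₂ • x₂) (u₃ • x₃)) (u₄ • x₄)) :=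
  Disjoint.mono (h.supp_smul_subset u₁ x₁)
    (suppL3_subset h hu.2.2.2.1 hu.2.2.2.2.1 hu.2.2.2.2.2 x₂ x₃ x₄)
    (Set.disjoint_union_right.mpr ⟨Set.disjoint_union_right.mpr ⟨hu.1, hu.2.1⟩, hu.2.2.1⟩)

/-- `gsum` of a `cf2` and a last twist is a `cf3`. -/
lemma nest21 (h : ParSum C) (u₁ v₁ u₂ v₂ u₃ v₃ : Minj ℕ) (x₁ x₂ x₃ : C)
    (hu : rd3 u₁ u₂ u₃) (hv : rd3 v₁ v₂ v₃)
    (D : DisjSupp (h.add (u₁ • x₁) (u₂ • x₂)) (u₃ • x₃))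
    (D' : DisjSupp (h.add (v₁ • x₁) (v₂ • x₂)) (v₃ • x₃)) {s t : C}
    (hs : s = h.add (h.add (u₁ • x₁) (u₂ • x₂)) (u₃ • x₃))
    (ht : t = h.add (h.add (v₁ • x₁) (v₂ • x₂)) (v₃ • x₃))
    (hs' : s = h.add (u₁ • x₁) (h.add (u₂ • x₂) (u₃ • x₃)))
    (ht' : t = h.add (v₁ • x₁) (h.add (v₂ • x₂) (v₃ • x₃))) :
    gsum h D D' (cf2 h u₁ v₁ u₂ v₂ x₁ x₂ hu.1 hv.1 rfl rfl) (gtw h v₃ u₃ x₃ rfl rfl) hs ht =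
      cf3 h u₁ v₁ u₂ v₂ u₃ v₃ x₁ x₂ x₃ hu hv hs' ht' := by
  refine Eq.trans (gsum_assoc h (ds2 h hu.1 x₁ x₂) (ds2 h hu.2.2 x₂ x₃) (ds2 h hu.2.1 x₁ x₃)
    (ds2 h hv.1 x₁ x₂) (ds2 h hv.2.2 x₂ x₃) (ds2 h hv.2.1 x₁ x₃)
    D D' (ds12 h hu.1 hu.2.1 hu.2.2 x₁ x₂ x₃) (ds12 h hv.1 hv.2.1 hv.2.2 x₁ x₂ x₃)
    _ _ _ hs ht) rfl

/-- `gsum` of a twist and a `cf2` is a `cf3`. -/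
lemma nest12 (h : ParSum C) (u₁ v₁ u₂ v₂ u₃ v₃ : Minj ℕ) (x₁ x₂ x₃ : C)
    (hu : rd3 u₁ u₂ u₃) (hv : rd3 v₁ v₂ v₃)
    (D : DisjSupp (u₁ • x₁) (h.add (u₂ • x₂) (u₃ • x₃)))
    (D' : DisjSupp (v₁ • x₁) (h.add (v₂ • x₂) (v₃ • x₃))) {s t : C}
    (hs : s = h.add (u₁ • x₁) (h.add (u₂ • x₂) (u₃ • x₃)))
    (ht : t = h.add (v₁ • x₁) (h.add (v₂ • x₂) (v₃ • x₃))) :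
    gsum h D D' (gtw h v₁ u₁ x₁ rfl rfl) (cf2 h u₂ v₂ u₃ v₃ x₂ x₃ hu.2.2 hv.2.2 rfl rfl)
        hs ht = cf3 h u₁ v₁ u₂ v₂ u₃ v₃ x₁ x₂ x₃ hu hv hs ht := rfl

end Toolkit7
section Toolkit8

variable {C : Type*} [Category C] [MulAction (Minj ℕ) C]

lemma gsum_conj_right (h : ParSum C) {x₁ y₁ x₂ y₂ x₂' y₂' : C}
    (hd : DisjSupp x₁ x₂) (hd' : DisjSupp y₁ y₂)
    (hd₂ : DisjSupp x₁ x₂') (hd₂' : DisjSupp y₁ y₂')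
    (p₂ : x₂ = x₂') (q₂ : y₂' = y₂) (f : x₁ ⟶ y₁) (g : x₂' ⟶ y₂') {s t : C}
    (hs : s = h.add x₁ x₂) (ht : t = h.add y₁ y₂) :
    gsum h hd hd' f (eqToHom p₂ ≫ g ≫ eqToHom q₂) hs ht =
      gsum h hd₂ hd₂' f g (hs.trans (by rw [p₂])) (ht.trans (by rw [← q₂])) := by
  subst p₂; subst q₂
  simp [gsum]

lemma gsum_conj_left (h : ParSum C) {x₁ y₁ x₁' y₁' x₂ y₂ : C}
    (hd : DisjSupp x₁ x₂) (hd' : DisjSupp y₁ y₂)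
    (hd₂ : DisjSupp x₁' x₂) (hd₂' : DisjSupp y₁' y₂)
    (p₁ : x₁ = x₁') (q₁ : y₁' = y₁) (f : x₁' ⟶ y₁') (g : x₂ ⟶ y₂) {s t : C}
    (hs : s = h.add x₁ x₂) (ht : t = h.add y₁ y₂) :
    gsum h hd hd' (eqToHom p₁ ≫ f ≫ eqToHom q₁) g hs ht =
      gsum h hd₂ hd₂' f g (hs.trans (by rw [p₁])) (ht.trans (by rw [← q₁])) := by
  subst p₁; subst q₁
  simp [gsum]

lemma swap_cf2 (h : ParSum C) (u₁ v₁ u₂ v₂ : Minj ℕ) (x₁ x₂ : C) (hu : rd2 u₁ u₂)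
    (hv : rd2 v₁ v₂) {s t : C} (hs : s = h.add (u₁ • x₁) (u₂ • x₂))
    (ht : t = h.add (v₁ • x₁) (v₂ • x₂))
    (hs' : s = h.add (u₂ • x₂) (u₁ • x₁)) (ht' : t = h.add (v₂ • x₂) (v₁ • x₁)) :
    cf2 h u₁ v₁ u₂ v₂ x₁ x₂ hu hv hs ht =
      cf2 h u₂ v₂ u₁ v₁ x₂ x₁ hu.symm hv.symm hs' ht' :=
  Eq.trans (gsum_comm h _ _ (ds2 h hu.symm x₂ x₁) (ds2 h hv.symm x₂ x₁) _ _ hs ht) rfl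


end Toolkit8
section Toolkit8b

variable {C : Type*} [Category C] [MulAction (Minj ℕ) C]

/-- A twist of a sum of two translates is a `cf2`. -/
lemma gtw_cf2 (h : ParSum C) (v u c d : Minj ℕ) (x y : C) (hcd : rd2 c d)
    (hu' : rd2 (u * c) (u * d)) (hv' : rd2 (v * c) (v * d)) {s t : C}
    (hs : s = u • h.add (c • x) (d • y)) (ht : t = v • h.add (c • x) (d • y))
    (hs' : s = h.add ((u * c) • x) ((u * d) • y))
    (ht' : t = h.add ((v * c) • x) ((v * d) • y)) :
    gtw h v u (h.add (c • x) (d • y)) hs ht =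
      cf2 h (u * c) (v * c) (u * d) (v * d) x y hu' hv' hs' ht' := by
  rw [gtw_add h v u (ds2 h hcd x y)
    (show DisjSupp (u • (c • x)) (u • (d • y)) by
      rw [← mul_smul, ← mul_smul]; exact ds2 h hu' x y)
    (show DisjSupp (v • (c • x)) (v • (d • y)) by
      rw [← mul_smul, ← mul_smul]; exact ds2 h hv' x y) hs ht,
    gtw_smul h v u c x, gtw_smul h v u d y,
    gtw_pres h (v * c) (u * c) x, gtw_pres h (v * d) (u * d) y,
    gsum_conj h _ _ (ds2 h hu' x y) (ds2 h hv' x y)]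
  rfl


end Toolkit8b

section T8c

variable {C : Type*} [Category C] [MulAction (Minj ℕ) C]

/-- `cf2` whose first slot is a sum expands to `cf3`. -/
lemma cf2_fst (h : ParSum C) (u₁ v₁ u₂ v₂ c d : Minj ℕ) (x₀ x₁ x₂ : C) (hcd : rd2 c d)
    (hu : rd2 u₁ u₂) (hv : rd2 v₁ v₂)
    (hu' : rd3 (u₁ * c) (u₁ * d) u₂) (hv' : rd3 (v₁ * c) (v₁ * d) v₂) {s t : C}
    (hs : s = h.add (u₁ • h.add (c • x₀) (d • x₁)) (u₂ • x₂))
    (ht : t = h.add (v₁ • h.add (c • x₀) (d • x₁)) (v₂ • x₂))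
    (hs' : s = h.add ((u₁ * c) • x₀) (h.add ((u₁ * d) • x₁) (u₂ • x₂)))
    (ht' : t = h.add ((v₁ * c) • x₀) (h.add ((v₁ * d) • x₁) (v₂ • x₂))) :
    cf2 h u₁ v₁ u₂ v₂ (h.add (c • x₀) (d • x₁)) x₂ hu hv hs ht =
      cf3 h (u₁ * c) (v₁ * c) (u₁ * d) (v₁ * d) u₂ v₂ x₀ x₁ x₂ hu' hv' hs' ht' := by
  unfold cf2
  rw [gtw_cf2 h v₁ u₁ c d x₀ x₁ hcd hu'.1 hv'.1 rfl rfl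
      (h.smul_add u₁ (ds2 h hcd x₀ x₁) |>.trans (by rw [← mul_smul, ← mul_smul]))
      (h.smul_add v₁ (ds2 h hcd x₀ x₁) |>.trans (by rw [← mul_smul, ← mul_smul])),
    cf2_pres,
    gsum_conj_left h _ _ (ds21 h hu'.1 hu'.2.1 hu'.2.2 x₀ x₁ x₂)
      (ds21 h hv'.1 hv'.2.1 hv'.2.2 x₀ x₁ x₂)]
  exact nest21 h _ _ _ _ _ _ x₀ x₁ x₂ hu' hv' _ _ _ _ hs' ht'

/-- `cf2` whose second slot is a sum expands to `cf3`. -/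
lemma cf2_snd (h : ParSum C) (u₁ v₁ u₂ v₂ c d : Minj ℕ) (x₁ x₂ x₃ : C) (hcd : rd2 c d)
    (hu : rd2 u₁ u₂) (hv : rd2 v₁ v₂)
    (hu' : rd3 u₁ (u₂ * c) (u₂ * d)) (hv' : rd3 v₁ (v₂ * c) (v₂ * d)) {s t : C}
    (hs : s = h.add (u₁ • x₁) (u₂ • h.add (c • x₂) (d • x₃)))
    (ht : t = h.add (v₁ • x₁) (v₂ • h.add (c • x₂) (d • x₃)))
    (hs' : s = h.add (u₁ • x₁) (h.add ((u₂ * c) • x₂) ((u₂ * d) • x₃)))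
    (ht' : t = h.add (v₁ • x₁) (h.add ((v₂ * c) • x₂) ((v₂ * d) • x₃))) :
    cf2 h u₁ v₁ u₂ v₂ x₁ (h.add (c • x₂) (d • x₃)) hu hv hs ht =
      cf3 h u₁ v₁ (u₂ * c) (v₂ * c) (u₂ * d) (v₂ * d) x₁ x₂ x₃ hu' hv' hs' ht' := by
  unfold cf2
  rw [gtw_cf2 h v₂ u₂ c d x₂ x₃ hcd hu'.2.2 hv'.2.2 rfl rfl
      (h.smul_add u₂ (ds2 h hcd x₂ x₃) |>.trans (by rw [← mul_smul, ← mul_smul]))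
      (h.smul_add v₂ (ds2 h hcd x₂ x₃) |>.trans (by rw [← mul_smul, ← mul_smul])),
    cf2_pres,
    gsum_conj_right h _ _ (ds12 h hu'.1 hu'.2.1 hu'.2.2 x₁ x₂ x₃)
      (ds12 h hv'.1 hv'.2.1 hv'.2.2 x₁ x₂ x₃)]
  rfl

end T8c
section Toolkit9

variable {C : Type*} [Category C] [MulAction (Minj ℕ) C]

/-- `gsum` of a twist and a `cf3` is a `cf4`. -/
lemma nest13 (h : ParSum C) (u₁ v₁ u₂ v₂ u₃ v₃ u₄ v₄ : Minj ℕ) (x₁ x₂ x₃ x₄ : C)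
    (hu : rd4 u₁ u₂ u₃ u₄) (hv : rd4 v₁ v₂ v₃ v₄)
    (D : DisjSupp (u₁ • x₁) (h.add (u₂ • x₂) (h.add (u₃ • x₃) (u₄ • x₄))))
    (D' : DisjSupp (v₁ • x₁) (h.add (v₂ • x₂) (h.add (v₃ • x₃) (v₄ • x₄)))) {s t : C}
    (hs : s = h.add (u₁ • x₁) (h.add (u₂ • x₂) (h.add (u₃ • x₃) (u₄ • x₄))))
    (ht : t = h.add (v₁ • x₁) (h.add (v₂ • x₂) (h.add (v₃ • x₃) (v₄ • x₄)))) :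
    gsum h D D' (gtw h v₁ u₁ x₁ rfl rfl)
        (cf3 h u₂ v₂ u₃ v₃ u₄ v₄ x₂ x₃ x₄ ⟨hu.2.2.2.1, hu.2.2.2.2.1, hu.2.2.2.2.2⟩
          ⟨hv.2.2.2.1, hv.2.2.2.2.1, hv.2.2.2.2.2⟩ rfl rfl) hs ht =
      cf4 h u₁ v₁ u₂ v₂ u₃ v₃ u₄ v₄ x₁ x₂ x₃ x₄ hu hv hs ht := rfl

/-- `gsum` of a `cf3` and a twist is a `cf4`. -/
lemma nest31 (h : ParSum C) (u₁ v₁ u₂ v₂ u₃ v₃ u₄ v₄ : Minj ℕ) (x₁ x₂ x₃ x₄ : C)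
    (hu : rd4 u₁ u₂ u₃ u₄) (hv : rd4 v₁ v₂ v₃ v₄)
    (HU3 : rd3 u₁ u₂ u₃) (HV3 : rd3 v₁ v₂ v₃)
    (D : DisjSupp (h.add (u₁ • x₁) (h.add (u₂ • x₂) (u₃ • x₃))) (u₄ • x₄))
    (D' : DisjSupp (h.add (v₁ • x₁) (h.add (v₂ • x₂) (v₃ • x₃))) (v₄ • x₄)) {s t : C}
    (hs : s = h.add (h.add (u₁ • x₁) (h.add (u₂ • x₂) (u₃ • x₃))) (u₄ • x₄))
    (ht : t = h.add (h.add (v₁ • x₁) (h.add (v₂ • x₂) (v₃ • x₃))) (v₄ • x₄))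
    (hs' : s = h.add (u₁ • x₁) (h.add (u₂ • x₂) (h.add (u₃ • x₃) (u₄ • x₄))))
    (ht' : t = h.add (v₁ • x₁) (h.add (v₂ • x₂) (h.add (v₃ • x₃) (v₄ • x₄)))) :
    gsum h D D' (cf3 h u₁ v₁ u₂ v₂ u₃ v₃ x₁ x₂ x₃ HU3 HV3 rfl rfl)
        (gtw h v₄ u₄ x₄ rfl rfl) hs ht =
      cf4 h u₁ v₁ u₂ v₂ u₃ v₃ u₄ v₄ x₁ x₂ x₃ x₄ hu hv hs' ht' := by
  refine Eq.trans (gsum_assoc h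
    (ds12 h HU3.1 HU3.2.1 HU3.2.2 x₁ x₂ x₃)
    (ds21 h hu.2.2.2.1 hu.2.2.2.2.1 hu.2.2.2.2.2 x₂ x₃ x₄)
    (ds2 h hu.2.2.1 x₁ x₄)
    (ds12 h HV3.1 HV3.2.1 HV3.2.2 x₁ x₂ x₃)
    (ds21 h hv.2.2.2.1 hv.2.2.2.2.1 hv.2.2.2.2.2 x₂ x₃ x₄)
    (ds2 h hv.2.2.1 x₁ x₄)
    D D' (ds13L h hu x₁ x₂ x₃ x₄) (ds13L h hv x₁ x₂ x₃ x₄)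
    _ _ _ hs ht) ?_
  rw [nest21 h u₂ v₂ u₃ v₃ u₄ v₄ x₂ x₃ x₄
      ⟨hu.2.2.2.1, hu.2.2.2.2.1, hu.2.2.2.2.2⟩ ⟨hv.2.2.2.1, hv.2.2.2.2.1, hv.2.2.2.2.2⟩
      (ds21 h hu.2.2.2.1 hu.2.2.2.2.1 hu.2.2.2.2.2 x₂ x₃ x₄)
      (ds21 h hv.2.2.2.1 hv.2.2.2.2.1 hv.2.2.2.2.2 x₂ x₃ x₄) rfl rfl
      (h.add_assoc' (ds2 h hu.2.2.2.1 x₂ x₃) (ds2 h hu.2.2.2.2.2 x₃ x₄)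
        (ds2 h hu.2.2.2.2.1 x₂ x₄))
      (h.add_assoc' (ds2 h hv.2.2.2.1 x₂ x₃) (ds2 h hv.2.2.2.2.2 x₃ x₄)
        (ds2 h hv.2.2.2.2.1 x₂ x₄)),
    cf3_pres,
    gsum_conj_right h _ _ (ds13 h hu x₁ x₂ x₃ x₄) (ds13 h hv x₁ x₂ x₃ x₄)]
  rfl

end Toolkit9
section Toolkit10

variable {C : Type*} [Category C] [MulAction (Minj ℕ) C]

/-- `cf3` whose first slot is a sum expands to `cf4`. -/
lemma cf3_first (h : ParSum C) (u₁ v₁ u₂ v₂ u₃ v₃ c d : Minj ℕ) (x₀ x₁ x₂ x₃ : C)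
    (hcd : rd2 c d) (HU : rd3 u₁ u₂ u₃) (HV : rd3 v₁ v₂ v₃)
    (hu : rd4 (u₁ * c) (u₁ * d) u₂ u₃) (hv : rd4 (v₁ * c) (v₁ * d) v₂ v₃) {s t : C}
    (hs : s = h.add (u₁ • h.add (c • x₀) (d • x₁)) (h.add (u₂ • x₂) (u₃ • x₃)))
    (ht : t = h.add (v₁ • h.add (c • x₀) (d • x₁)) (h.add (v₂ • x₂) (v₃ • x₃)))
    (hs' : s = h.add ((u₁ * c) • x₀) (h.add ((u₁ * d) • x₁) (h.add (u₂ • x₂) (u₃ • x₃))))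
    (ht' : t = h.add ((v₁ * c) • x₀) (h.add ((v₁ * d) • x₁) (h.add (v₂ • x₂) (v₃ • x₃)))) :
    cf3 h u₁ v₁ u₂ v₂ u₃ v₃ (h.add (c • x₀) (d • x₁)) x₂ x₃ HU HV hs ht =
      cf4 h (u₁ * c) (v₁ * c) (u₁ * d) (v₁ * d) u₂ v₂ u₃ v₃ x₀ x₁ x₂ x₃ hu hv hs' ht' := by
  unfold cf3
  rw [gtw_cf2 h v₁ u₁ c d x₀ x₁ hcd hu.1 hv.1 rfl rfl
      ((h.smul_add u₁ (ds2 h hcd x₀ x₁)).trans (by rw [← mul_smul, ← mul_smul]))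
      ((h.smul_add v₁ (ds2 h hcd x₀ x₁)).trans (by rw [← mul_smul, ← mul_smul])),
    cf2_pres,
    gsum_conj_left h _ _ (ds22 h hu x₀ x₁ x₂ x₃) (ds22 h hv x₀ x₁ x₂ x₃)]
  refine Eq.trans (gsum_assoc h
    (ds2 h hu.1 x₀ x₁)
    (ds12 h hu.2.2.2.1 hu.2.2.2.2.1 hu.2.2.2.2.2 x₁ x₂ x₃)
    (ds12 h hu.2.1 hu.2.2.1 hu.2.2.2.2.2 x₀ x₂ x₃)
    (ds2 h hv.1 x₀ x₁)
    (ds12 h hv.2.2.2.1 hv.2.2.2.2.1 hv.2.2.2.2.2 x₁ x₂ x₃)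
    (ds12 h hv.2.1 hv.2.2.1 hv.2.2.2.2.2 x₀ x₂ x₃)
    (ds22 h hu x₀ x₁ x₂ x₃) (ds22 h hv x₀ x₁ x₂ x₃)
    (ds13 h hu x₀ x₁ x₂ x₃) (ds13 h hv x₀ x₁ x₂ x₃)
    _ _ _ _ _) rfl

/-- `cf3` whose middle slot is a sum expands to `cf4`. -/
lemma cf3_mid (h : ParSum C) (u₁ v₁ u₂ v₂ u₃ v₃ c d : Minj ℕ) (x₁ x₂ x₃ x₄ : C)
    (hcd : rd2 c d) (HU : rd3 u₁ u₂ u₃) (HV : rd3 v₁ v₂ v₃)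
    (hu : rd4 u₁ (u₂ * c) (u₂ * d) u₃) (hv : rd4 v₁ (v₂ * c) (v₂ * d) v₃) {s t : C}
    (hs : s = h.add (u₁ • x₁) (h.add (u₂ • h.add (c • x₂) (d • x₃)) (u₃ • x₄)))
    (ht : t = h.add (v₁ • x₁) (h.add (v₂ • h.add (c • x₂) (d • x₃)) (v₃ • x₄)))
    (hs' : s = h.add (u₁ • x₁) (h.add ((u₂ * c) • x₂) (h.add ((u₂ * d) • x₃) (u₃ • x₄))))
    (ht' : t = h.add (v₁ • x₁) (h.add ((v₂ * c) • x₂) (h.add ((v₂ * d) • x₃) (v₃ • x₄)))) :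
    cf3 h u₁ v₁ u₂ v₂ u₃ v₃ x₁ (h.add (c • x₂) (d • x₃)) x₄ HU HV hs ht =
      cf4 h u₁ v₁ (u₂ * c) (v₂ * c) (u₂ * d) (v₂ * d) u₃ v₃ x₁ x₂ x₃ x₄ hu hv hs' ht' := by
  unfold cf3
  rw [cf2_fst h u₂ v₂ u₃ v₃ c d x₂ x₃ x₄ hcd HU.2.2 HV.2.2
      ⟨hu.2.2.2.1, hu.2.2.2.2.1, hu.2.2.2.2.2⟩ ⟨hv.2.2.2.1, hv.2.2.2.2.1, hv.2.2.2.2.2⟩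
      rfl rfl
      (by rw [h.smul_add u₂ (ds2 h hcd x₂ x₃), ← mul_smul, ← mul_smul,
        h.add_assoc' (ds2 h hu.2.2.2.1 x₂ x₃) (ds2 h hu.2.2.2.2.2 x₃ x₄)
          (ds2 h hu.2.2.2.2.1 x₂ x₄)])
      (by rw [h.smul_add v₂ (ds2 h hcd x₂ x₃), ← mul_smul, ← mul_smul,
        h.add_assoc' (ds2 h hv.2.2.2.1 x₂ x₃) (ds2 h hv.2.2.2.2.2 x₃ x₄)
          (ds2 h hv.2.2.2.2.1 x₂ x₄)]),
    cf3_pres,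
    gsum_conj_right h _ _ (ds13 h hu x₁ x₂ x₃ x₄) (ds13 h hv x₁ x₂ x₃ x₄)]
  rfl

/-- `cf3` whose last slot is a sum expands to `cf4`. -/
lemma cf3_last (h : ParSum C) (u₁ v₁ u₂ v₂ u₃ v₃ c d : Minj ℕ) (x₁ x₂ x₃ x₄ : C)
    (hcd : rd2 c d) (HU : rd3 u₁ u₂ u₃) (HV : rd3 v₁ v₂ v₃)
    (hu : rd4 u₁ u₂ (u₃ * c) (u₃ * d)) (hv : rd4 v₁ v₂ (v₃ * c) (v₃ * d)) {s t : C}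
    (hs : s = h.add (u₁ • x₁) (h.add (u₂ • x₂) (u₃ • h.add (c • x₃) (d • x₄))))
    (ht : t = h.add (v₁ • x₁) (h.add (v₂ • x₂) (v₃ • h.add (c • x₃) (d • x₄))))
    (hs' : s = h.add (u₁ • x₁) (h.add (u₂ • x₂) (h.add ((u₃ * c) • x₃) ((u₃ * d) • x₄))))
    (ht' : t = h.add (v₁ • x₁) (h.add (v₂ • x₂) (h.add ((v₃ * c) • x₃) ((v₃ * d) • x₄)))) :
    cf3 h u₁ v₁ u₂ v₂ u₃ v₃ x₁ x₂ (h.add (c • x₃) (d • x₄)) HU HV hs ht =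
      cf4 h u₁ v₁ u₂ v₂ (u₃ * c) (v₃ * c) (u₃ * d) (v₃ * d) x₁ x₂ x₃ x₄ hu hv hs' ht' := by
  unfold cf3
  rw [cf2_snd h u₂ v₂ u₃ v₃ c d x₂ x₃ x₄ hcd HU.2.2 HV.2.2
      ⟨hu.2.2.2.1, hu.2.2.2.2.1, hu.2.2.2.2.2⟩ ⟨hv.2.2.2.1, hv.2.2.2.2.1, hv.2.2.2.2.2⟩
      rfl rfl
      (by rw [h.smul_add u₃ (ds2 h hcd x₃ x₄), ← mul_smul, ← mul_smul])
      (by rw [h.smul_add v₃ (ds2 h hcd x₃ x₄), ← mul_smul, ← mul_smul]),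
    cf3_pres,
    gsum_conj_right h _ _ (ds13 h hu x₁ x₂ x₃ x₄) (ds13 h hv x₁ x₂ x₃ x₄)]
  rfl

/-- Cyclic rotation of a `cf3`. -/
lemma rot_cf3 (h : ParSum C) (u₁ v₁ u₂ v₂ u₃ v₃ : Minj ℕ) (x₁ x₂ x₃ : C)
    (hu : rd3 u₁ u₂ u₃) (hv : rd3 v₁ v₂ v₃) (hu' : rd3 u₂ u₃ u₁) (hv' : rd3 v₂ v₃ v₁)
    {s t : C}
    (hs : s = h.add (u₁ • x₁) (h.add (u₂ • x₂) (u₃ • x₃)))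
    (ht : t = h.add (v₁ • x₁) (h.add (v₂ • x₂) (v₃ • x₃)))
    (hs' : s = h.add (u₂ • x₂) (h.add (u₃ • x₃) (u₁ • x₁)))
    (ht' : t = h.add (v₂ • x₂) (h.add (v₃ • x₃) (v₁ • x₁))) :
    cf3 h u₁ v₁ u₂ v₂ u₃ v₃ x₁ x₂ x₃ hu hv hs ht =
      cf3 h u₂ v₂ u₃ v₃ u₁ v₁ x₂ x₃ x₁ hu' hv' hs' ht' :=
  Eq.trans (gsum_comm h (ds12 h hu.1 hu.2.1 hu.2.2 x₁ x₂ x₃)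
    (ds12 h hv.1 hv.2.1 hv.2.2 x₁ x₂ x₃)
    (ds21 h hu.2.2 hu.1.symm hu.2.1.symm x₂ x₃ x₁)
    (ds21 h hv.2.2 hv.1.symm hv.2.1.symm x₂ x₃ x₁) _ _ hs ht)
    (nest21 h u₂ v₂ u₃ v₃ u₁ v₁ x₂ x₃ x₁ hu' hv' _ _ _ _ hs' ht')

/-- Swap the last two slots of a `cf3`. -/
lemma swap23_cf3 (h : ParSum C) (u₁ v₁ u₂ v₂ u₃ v₃ : Minj ℕ) (x₁ x₂ x₃ : C)
    (hu : rd3 u₁ u₂ u₃) (hv : rd3 v₁ v₂ v₃) (hu' : rd3 u₁ u₃ u₂) (hv' : rd3 v₁ v₃ v₂)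
    {s t : C}
    (hs : s = h.add (u₁ • x₁) (h.add (u₂ • x₂) (u₃ • x₃)))
    (ht : t = h.add (v₁ • x₁) (h.add (v₂ • x₂) (v₃ • x₃)))
    (hs' : s = h.add (u₁ • x₁) (h.add (u₃ • x₃) (u₂ • x₂)))
    (ht' : t = h.add (v₁ • x₁) (h.add (v₃ • x₃) (v₂ • x₂))) :
    cf3 h u₁ v₁ u₂ v₂ u₃ v₃ x₁ x₂ x₃ hu hv hs ht =
      cf3 h u₁ v₁ u₃ v₃ u₂ v₂ x₁ x₃ x₂ hu' hv' hs' ht' := by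
  unfold cf3
  rw [swap_cf2 h u₂ v₂ u₃ v₃ x₂ x₃ hu.2.2 hv.2.2 rfl rfl
      (h.add_comm' (ds2 h hu.2.2 x₂ x₃)) (h.add_comm' (ds2 h hv.2.2 x₂ x₃)),
    cf2_pres,
    gsum_conj_right h _ _ (ds12 h hu'.1 hu'.2.1 hu'.2.2 x₁ x₃ x₂)
      (ds12 h hv'.1 hv'.2.1 hv'.2.2 x₁ x₃ x₂)]

/-- Collapse a `cf3` whose middle object is zero. -/
lemma cf3_zero_mid (h : ParSum C) (u₁ v₁ u₂ v₂ u₃ v₃ : Minj ℕ) (x₁ x₃ : C)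
    (hu : rd3 u₁ u₂ u₃) (hv : rd3 v₁ v₂ v₃) (hu' : rd2 u₁ u₃) (hv' : rd2 v₁ v₃) {s t : C}
    (hs : s = h.add (u₁ • x₁) (h.add (u₂ • h.zero) (u₃ • x₃)))
    (ht : t = h.add (v₁ • x₁) (h.add (v₂ • h.zero) (v₃ • x₃)))
    (hs' : s = h.add (u₁ • x₁) (u₃ • x₃))
    (ht' : t = h.add (v₁ • x₁) (v₃ • x₃)) :
    cf3 h u₁ v₁ u₂ v₂ u₃ v₃ x₁ h.zero x₃ hu hv hs ht =
      cf2 h u₁ v₁ u₃ v₃ x₁ x₃ hu' hv' hs' ht' := by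
  unfold cf3
  have hg : cf2 h u₂ v₂ u₃ v₃ h.zero x₃ hu.2.2 hv.2.2 rfl rfl =
      eqToHom (show h.add (u₂ • h.zero) (u₃ • x₃) = u₃ • x₃ by
        rw [h.smul_zero', h.zero_add']) ≫ gtw h v₃ u₃ x₃ rfl rfl ≫
      eqToHom (show v₃ • x₃ = h.add (v₂ • h.zero) (v₃ • x₃) by
        rw [h.smul_zero', h.zero_add']) := by
    unfold cf2
    exact gsum_zero_left h (h.smul_zero' u₂) (h.smul_zero' v₂) _
      (gtw_zero h v₂ u₂ rfl rfl) _ _ _ rfl rfl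
  rw [hg, gsum_conj_right h _ _ (ds2 h hu' x₁ x₃) (ds2 h hv' x₁ x₃)]
  rfl

end Toolkit10

section Toolkit13

variable {C : Type*} [Category C] [MulAction (Minj ℕ) C]

/-- Swap the first two slots of a `cf3`. -/
lemma swap12_cf3 (h : ParSum C) (u₁ v₁ u₂ v₂ u₃ v₃ : Minj ℕ) (x₁ x₂ x₃ : C)
    (hu : rd3 u₁ u₂ u₃) (hv : rd3 v₁ v₂ v₃) (hu' : rd3 u₂ u₁ u₃) (hv' : rd3 v₂ v₁ v₃)
    {s t : C}
    (hs : s = h.add (u₁ • x₁) (h.add (u₂ • x₂) (u₃ • x₃)))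
    (ht : t = h.add (v₁ • x₁) (h.add (v₂ • x₂) (v₃ • x₃)))
    (hs' : s = h.add (u₂ • x₂) (h.add (u₁ • x₁) (u₃ • x₃)))
    (ht' : t = h.add (v₂ • x₂) (h.add (v₁ • x₁) (v₃ • x₃))) :
    cf3 h u₁ v₁ u₂ v₂ u₃ v₃ x₁ x₂ x₃ hu hv hs ht =
      cf3 h u₂ v₂ u₁ v₁ u₃ v₃ x₂ x₁ x₃ hu' hv' hs' ht' := by
  refine Eq.trans ?_ (nest21 h u₂ v₂ u₁ v₁ u₃ v₃ x₂ x₁ x₃ hu' hv'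
    (ds21 h hu'.1 hu'.2.1 hu'.2.2 x₂ x₁ x₃) (ds21 h hv'.1 hv'.2.1 hv'.2.2 x₂ x₁ x₃)
    (hs'.trans (h.add_assoc' (ds2 h hu'.1 x₂ x₁) (ds2 h hu'.2.2 x₁ x₃)
      (ds2 h hu'.2.1 x₂ x₃)).symm)
    (ht'.trans (h.add_assoc' (ds2 h hv'.1 x₂ x₁) (ds2 h hv'.2.2 x₁ x₃)
      (ds2 h hv'.2.1 x₂ x₃)).symm) hs' ht')
  refine Eq.trans ((nest21 h u₁ v₁ u₂ v₂ u₃ v₃ x₁ x₂ x₃ hu hv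
    (ds21 h hu.1 hu.2.1 hu.2.2 x₁ x₂ x₃) (ds21 h hv.1 hv.2.1 hv.2.2 x₁ x₂ x₃)
    (hs.trans (h.add_assoc' (ds2 h hu.1 x₁ x₂) (ds2 h hu.2.2 x₂ x₃)
      (ds2 h hu.2.1 x₁ x₃)).symm)
    (ht.trans (h.add_assoc' (ds2 h hv.1 x₁ x₂) (ds2 h hv.2.2 x₂ x₃)
      (ds2 h hv.2.1 x₁ x₃)).symm) hs ht).symm) ?_
  rw [swap_cf2 h u₁ v₁ u₂ v₂ x₁ x₂ hu.1 hv.1 rfl rfl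
      (h.add_comm' (ds2 h hu.1 x₁ x₂)) (h.add_comm' (ds2 h hv.1 x₁ x₂)),
    cf2_pres,
    gsum_conj_left h _ _ (ds21 h hu'.1 hu'.2.1 hu'.2.2 x₂ x₁ x₃)
      (ds21 h hv'.1 hv'.2.1 hv'.2.2 x₂ x₁ x₃)]

end Toolkit13

section PhiForms

variable {C : Type*} [Category C] [MulAction (Minj ℕ) C]
variable (h : ParSum C) (φ : Fin 2 × ℕ → ℕ) (hφ : Function.Injective φ)

local notation "pa" => phiC φ hφ 0
local notation "pb" => phiC φ hφ 1
local notation "dab" => disjoint_phiC_ranges φ hφ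

lemma braid_cf2 (x y : C) :
    braiding h φ hφ x y =
      cf2 h pa pb pb pa x y dab (rd2.symm dab) rfl
        ((h.add_comm' (d21 h φ hφ x y)).symm) := by
  simp [braiding, cf2, gsum, gtw]

lemma braid_braid (x y : C) :
    braiding h φ hφ x y ≫ braiding h φ hφ y x = 𝟙 (Fobj h φ hφ x y) := by
  rw [braid_cf2 h φ hφ x y, braid_cf2 h φ hφ y x,
    swap_cf2 h pa pb pb pa y x dab (rd2.symm dab) rfl
      ((h.add_comm' (d21 h φ hφ y x)).symm)
      (h.add_comm' (d12 h φ hφ y x)) rfl,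
    cf2_comp, cf2_id]
  simp

end PhiForms

section PhiForms2

variable {C : Type*} [Category C] [MulAction (Minj ℕ) C]
variable (h : ParSum C) (φ : Fin 2 × ℕ → ℕ) (hφ : Function.Injective φ)

local notation "pa" => phiC φ hφ 0
local notation "pb" => phiC φ hφ 1
local notation "dab" => disjoint_phiC_ranges φ hφ

lemma srcEq3 (x y z : C) :
    Fobj h φ hφ (Fobj h φ hφ x y) z =
      h.add ((pa * pa) • x) (h.add ((pa * pb) • y) (pb • z)) :=
  (assocSrc_eq h φ hφ x y z).trans
    (h.add_assoc' (ds2 h (rd2_lmul dab pa) x y) (ds2 h (rd2_mul_left dab pb) y z)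
      (ds2 h (rd2_mul_left dab pa) x z))

lemma Fhom_gsum {x x' y y' : C} (f : x ⟶ y) (g : x' ⟶ y') :
    Fhom h φ hφ f g = gsum h (d12 h φ hφ x x') (d12 h φ hφ y y')
      (h.toMCat.act pa f) (h.toMCat.act pb g) rfl rfl := by
  simp [Fhom, gsum]

lemma assoc_cf3 (x y z : C) :
    parAssociator h φ hφ x y z =
      cf3 h (pa * pa) pa (pa * pb) (pb * pa) pb (pb * pb) x y z
        ⟨rd2_lmul dab pa, rd2_mul_left dab pa, rd2_mul_left dab pb⟩
        ⟨rd2_mul_right dab pa, rd2_mul_right dab pb, rd2_lmul dab pb⟩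
        (srcEq3 h φ hφ x y z) (assocTgt_eq h φ hφ x y z) := by
  have e1 : parAssociator h φ hφ x y z = gsum h (dI1 h φ hφ x y z) (dI2 h φ hφ x y z)
      (gsum h (d00_01 h φ hφ x y) (d0_10 h φ hφ x y)
        (gtw h pa (pa * pa) x rfl rfl) (gtw h (pb * pa) (pa * pb) y rfl rfl) rfl rfl)
      (gtw h (pb * pb) pb z rfl rfl)
      (assocSrc_eq h φ hφ x y z)
      ((assocTgt_eq h φ hφ x y z).trans (assocMid_eq h φ hφ x y z).symm) := by
    simp [parAssociator, gsum, gtw]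
  refine e1.trans (Eq.trans (gsum_assoc h
    (ds2 h (rd2_lmul dab pa) x y) (ds2 h (rd2_mul_left dab pb) y z)
    (ds2 h (rd2_mul_left dab pa) x z)
    (ds2 h (rd2_mul_right dab pa) x y) (ds2 h (rd2_lmul dab pb) y z)
    (ds2 h (rd2_mul_right dab pb) x z)
    (ds21 h (rd2_lmul dab pa) (rd2_mul_left dab pa) (rd2_mul_left dab pb) x y z)
    (ds21 h (rd2_mul_right dab pa) (rd2_mul_right dab pb) (rd2_lmul dab pb) x y z)
    (ds12 h (rd2_lmul dab pa) (rd2_mul_left dab pa) (rd2_mul_left dab pb) x y z)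
    (ds12 h (rd2_mul_right dab pa) (rd2_mul_right dab pb) (rd2_lmul dab pb) x y z)
    _ _ _ _ _) rfl)

lemma runit_gtw (x : C) :
    rightUnitor h φ hφ x =
      gtw h pa 1 x (one_smul (Minj ℕ) x).symm (zero_right_eq h φ hφ x).symm := by
  simp [rightUnitor, gtw]

lemma lunit_gtw (x : C) :
    leftUnitor h φ hφ x =
      gtw h pb 1 x (one_smul (Minj ℕ) x).symm (zero_left_eq h φ hφ x).symm := by
  simp [leftUnitor, gtw]

lemma triangle' (x y : C) :
    Fhom h φ hφ (rightUnitor h φ hφ x) (𝟙 y) ≫ parAssociator h φ hφ x h.zero y =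
      Fhom h φ hφ (𝟙 x) (leftUnitor h φ hφ y) := by
  have E : Fobj h φ hφ (Fobj h φ hφ x h.zero) y = h.add ((pa * pa) • x) (pb • y) := by
    show h.add (pa • Fobj h φ hφ x h.zero) (pb • y) = _
    rw [← zero_right_eq h φ hφ x, ← mul_smul]
  have E2 : Fobj h φ hφ x (Fobj h φ hφ h.zero y) = h.add (pa • x) ((pb * pb) • y) := by
    show h.add (pa • x) (pb • Fobj h φ hφ h.zero y) = _
    rw [← zero_left_eq h φ hφ y, ← mul_smul]
  have e1 : Fhom h φ hφ (rightUnitor h φ hφ x) (𝟙 y) =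
      cf2 h pa (pa * pa) pb pb x y dab (rd2_mul_left dab pa) rfl E := by
    rw [Fhom_gsum h φ hφ, runit_gtw h φ hφ x, act_gtw, MCat.act_id, id_gtw h pb y,
      gtw_cast h (mul_one pa) (rfl : pa * pa = pa * pa) _ _ (rfl : pa • x = pa • x)
        (show pa • Fobj h φ hφ x h.zero = (pa * pa) • x by
          rw [← zero_right_eq h φ hφ x, ← mul_smul]),
      gtw_pres h (pa * pa) pa x,
      gsum_conj_left h _ _ (ds2 h dab x y) (ds2 h (rd2_mul_left dab pa) x y)]
    rfl
  have e2 : parAssociator h φ hφ x h.zero y =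
      cf2 h (pa * pa) pa pb (pb * pb) x y (rd2_mul_left dab pa) (rd2_mul_right dab pb)
        E E2 := by
    rw [assoc_cf3 h φ hφ x h.zero y,
      cf3_zero_mid h (pa * pa) pa (pa * pb) (pb * pa) pb (pb * pb) x y
        ⟨rd2_lmul dab pa, rd2_mul_left dab pa, rd2_mul_left dab pb⟩
        ⟨rd2_mul_right dab pa, rd2_mul_right dab pb, rd2_lmul dab pb⟩
        (rd2_mul_left dab pa) (rd2_mul_right dab pb) _ _ E E2]
  have e3 : Fhom h φ hφ (𝟙 x) (leftUnitor h φ hφ y) =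
      cf2 h pa pa pb (pb * pb) x y dab (rd2_mul_right dab pb) rfl E2 := by
    rw [Fhom_gsum h φ hφ, lunit_gtw h φ hφ y, act_gtw, MCat.act_id, id_gtw h pa x,
      gtw_cast h (mul_one pb) (rfl : pb * pb = pb * pb) _ _ (rfl : pb • y = pb • y)
        (show pb • Fobj h φ hφ h.zero y = (pb * pb) • y by
          rw [← zero_left_eq h φ hφ y, ← mul_smul]),
      gtw_pres h (pb * pb) pb y,
      gsum_conj_right h _ _ (ds2 h dab x y) (ds2 h (rd2_mul_right dab pb) x y)]
    rfl
  rw [e1, e2, e3, cf2_comp]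

end PhiForms2

section Hexagon

variable {C : Type*} [Category C] [MulAction (Minj ℕ) C]

lemma add_rot (h : ParSum C) {u₁ u₂ u₃ : Minj ℕ} (hu : rd3 u₁ u₂ u₃) (x₁ x₂ x₃ : C) :
    h.add (u₁ • x₁) (h.add (u₂ • x₂) (u₃ • x₃)) =
      h.add (u₂ • x₂) (h.add (u₃ • x₃) (u₁ • x₁)) := by
  rw [h.add_comm' (ds12 h hu.1 hu.2.1 hu.2.2 x₁ x₂ x₃),
    h.add_assoc' (ds2 h hu.2.2 x₂ x₃) (ds2 h hu.2.1.symm x₃ x₁) (ds2 h hu.1.symm x₂ x₁)]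

lemma add_swap12 (h : ParSum C) {u₁ u₂ u₃ : Minj ℕ} (hu : rd3 u₁ u₂ u₃) (x₁ x₂ x₃ : C) :
    h.add (u₁ • x₁) (h.add (u₂ • x₂) (u₃ • x₃)) =
      h.add (u₂ • x₂) (h.add (u₁ • x₁) (u₃ • x₃)) := by
  rw [← h.add_assoc' (ds2 h hu.1 x₁ x₂) (ds2 h hu.2.2 x₂ x₃) (ds2 h hu.2.1 x₁ x₃),
    h.add_comm' (ds2 h hu.1 x₁ x₂),
    h.add_assoc' (ds2 h hu.1.symm x₂ x₁) (ds2 h hu.2.1 x₁ x₃) (ds2 h hu.2.2 x₂ x₃)]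

variable (h : ParSum C) (φ : Fin 2 × ℕ → ℕ) (hφ : Function.Injective φ)

local notation "pa" => phiC φ hφ 0
local notation "pb" => phiC φ hφ 1
local notation "dab" => disjoint_phiC_ranges φ hφ

lemma hexagon' (x y z : C) :
    parAssociator h φ hφ x y z ≫ braiding h φ hφ x (Fobj h φ hφ y z) ≫
        parAssociator h φ hφ y z x =
      Fhom h φ hφ (braiding h φ hφ x y) (𝟙 z) ≫ parAssociator h φ hφ y x z ≫
        Fhom h φ hφ (𝟙 y) (braiding h φ hφ x z) := by
  have A1 : rd2 (pa * pa) (pa * pb) := rd2_lmul dab pa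
  have A2 : rd2 (pa * pa) pb := rd2_mul_left dab pa
  have A3 : rd2 (pa * pb) pb := rd2_mul_left dab pb
  have A4 : rd2 pa (pb * pa) := rd2_mul_right dab pa
  have A5 : rd2 pa (pb * pb) := rd2_mul_right dab pb
  have A6 : rd2 (pb * pa) (pb * pb) := rd2_lmul dab pb
  -- object equalities
  have EE : Fobj h φ hφ (Fobj h φ hφ y z) x =
      h.add (pb • x) (h.add ((pa * pa) • y) ((pa * pb) • z)) :=
    (srcEq3 h φ hφ y z x).trans ((add_rot h ⟨A1, A2, A3⟩ y z x).trans
      (add_rot h ⟨A3, A1.symm, A2.symm⟩ z x y))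
  have T : Fobj h φ hφ y (Fobj h φ hφ z x) =
      h.add ((pb * pb) • x) (h.add (pa • y) ((pb * pa) • z)) :=
    (assocTgt_eq h φ hφ y z x).trans ((add_rot h ⟨A4, A5, A6⟩ y z x).trans
      (add_rot h ⟨A6, A4.symm, A5.symm⟩ z x y))
  have R1t : Fobj h φ hφ (Fobj h φ hφ y x) z =
      h.add ((pa * pb) • x) (h.add ((pa * pa) • y) (pb • z)) :=
    (srcEq3 h φ hφ y x z).trans (add_swap12 h ⟨A1, A2, A3⟩ y x z)
  have R2t : Fobj h φ hφ y (Fobj h φ hφ x z) =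
      h.add ((pb * pa) • x) (h.add (pa • y) ((pb * pb) • z)) :=
    (assocTgt_eq h φ hφ y x z).trans (add_swap12 h ⟨A4, A5, A6⟩ y x z)
  -- left factors
  have H2 : braiding h φ hφ x (Fobj h φ hφ y z) =
      cf3 h pa pb (pb * pa) (pa * pa) (pb * pb) (pa * pb) x y z
        ⟨A4, A5, A6⟩ ⟨A2.symm, A3.symm, A1⟩ (assocTgt_eq h φ hφ x y z) EE := by
    rw [braid_cf2 h φ hφ x (Fobj h φ hφ y z)]
    exact cf2_snd h pa pb pb pa pa pb x y z dab dab (rd2.symm dab)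
      ⟨A4, A5, A6⟩ ⟨A2.symm, A3.symm, A1⟩ rfl
      ((h.add_comm' (d21 h φ hφ x (Fobj h φ hφ y z))).symm)
      (assocTgt_eq h φ hφ x y z) EE
  have H3 : parAssociator h φ hφ y z x =
      cf3 h pb (pb * pb) (pa * pa) pa (pa * pb) (pb * pa) x y z
        ⟨A2.symm, A3.symm, A1⟩ ⟨A5.symm, A6.symm, A4⟩ EE T := by
    rw [assoc_cf3 h φ hφ y z x]
    refine Eq.trans (rot_cf3 h (pa * pa) pa (pa * pb) (pb * pa) pb (pb * pb) y z x
      ⟨A1, A2, A3⟩ ⟨A4, A5, A6⟩ ⟨A3, A1.symm, A2.symm⟩ ⟨A6, A4.symm, A5.symm⟩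
      (srcEq3 h φ hφ y z x) (assocTgt_eq h φ hφ y z x)
      ((srcEq3 h φ hφ y z x).trans (add_rot h ⟨A1, A2, A3⟩ y z x))
      ((assocTgt_eq h φ hφ y z x).trans (add_rot h ⟨A4, A5, A6⟩ y z x))) ?_
    exact rot_cf3 h (pa * pb) (pb * pa) pb (pb * pb) (pa * pa) pa z x y
      ⟨A3, A1.symm, A2.symm⟩ ⟨A6, A4.symm, A5.symm⟩
      ⟨A2.symm, A3.symm, A1⟩ ⟨A5.symm, A6.symm, A4⟩ _ _ EE T
  -- right factors
  have R1 : Fhom h φ hφ (braiding h φ hφ x y) (𝟙 z) =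
      cf3 h (pa * pa) (pa * pb) (pa * pb) (pa * pa) pb pb x y z
        ⟨A1, A2, A3⟩ ⟨A1.symm, A3, A2⟩ (srcEq3 h φ hφ x y z) R1t := by
    rw [Fhom_gsum h φ hφ, braid_cf2 h φ hφ x y,
      act_cf2 h pa pa pb pb pa x y dab (rd2.symm dab) A1 A1.symm,
      MCat.act_id, id_gtw h pb z, cf2_pres,
      gsum_conj_left h _ _ (ds21 h A1 A2 A3 x y z) (ds21 h A1.symm A3 A2 x y z)]
    exact nest21 h (pa * pa) (pa * pb) (pa * pb) (pa * pa) pb pb x y z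
      ⟨A1, A2, A3⟩ ⟨A1.symm, A3, A2⟩ _ _ _ _ (srcEq3 h φ hφ x y z) R1t
  have R2 : parAssociator h φ hφ y x z =
      cf3 h (pa * pb) (pb * pa) (pa * pa) pa pb (pb * pb) x y z
        ⟨A1.symm, A3, A2⟩ ⟨A4.symm, A6, A5⟩ R1t R2t := by
    rw [assoc_cf3 h φ hφ y x z]
    exact swap12_cf3 h (pa * pa) pa (pa * pb) (pb * pa) pb (pb * pb) y x z
      ⟨A1, A2, A3⟩ ⟨A4, A5, A6⟩ ⟨A1.symm, A3, A2⟩ ⟨A4.symm, A6, A5⟩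
      (srcEq3 h φ hφ y x z) (assocTgt_eq h φ hφ y x z) R1t R2t
  have R3 : Fhom h φ hφ (𝟙 y) (braiding h φ hφ x z) =
      cf3 h (pb * pa) (pb * pb) pa pa (pb * pb) (pb * pa) x y z
        ⟨A4.symm, A6, A5⟩ ⟨A5.symm, A6.symm, A4⟩ R2t T := by
    rw [Fhom_gsum h φ hφ, braid_cf2 h φ hφ x z,
      act_cf2 h pb pa pb pb pa x z dab (rd2.symm dab) A6 A6.symm,
      MCat.act_id, id_gtw h pa y, cf2_pres,
      gsum_conj_right h _ _ (ds12 h A4 A5 A6 y x z) (ds12 h A5 A4 A6.symm y x z)]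
    refine Eq.trans (rfl :
      _ = cf3 h pa pa (pb * pa) (pb * pb) (pb * pb) (pb * pa) y x z
        ⟨A4, A5, A6⟩ ⟨A5, A4, A6.symm⟩
        (rfl.trans (show h.add (pa • y) (pb • Fobj h φ hφ x z) =
            h.add (pa • y) (h.add ((pb * pa) • x) ((pb * pb) • z)) by
          show h.add (pa • y) (pb • h.add (pa • x) (pb • z)) = _
          rw [h.smul_add pb (d12 h φ hφ x z), ← mul_smul, ← mul_smul]))
        (rfl.trans (show h.add (pa • y) (pb • Fobj h φ hφ z x) =
            h.add (pa • y) (h.add ((pb * pb) • x) ((pb * pa) • z)) by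
          show h.add (pa • y) (pb • h.add (pa • z) (pb • x)) = _
          rw [h.smul_add pb (d12 h φ hφ z x), ← mul_smul, ← mul_smul,
            h.add_comm' (ds2 h A6 z x)]))) ?_
    exact swap12_cf3 h pa pa (pb * pa) (pb * pb) (pb * pb) (pb * pa) y x z
      ⟨A4, A5, A6⟩ ⟨A5, A4, A6.symm⟩ ⟨A4.symm, A6, A5⟩ ⟨A5.symm, A6.symm, A4⟩
      _ _ R2t T
  rw [assoc_cf3 h φ hφ x y z, H2, H3, R1, R2, R3, cf3_comp, cf3_comp, cf3_comp, cf3_comp]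

end Hexagon

section Pentagon

variable {C : Type*} [Category C] [MulAction (Minj ℕ) C]

lemma rd2_cast {u u' v v' : Minj ℕ} (hu : u = u') (hv : v = v') (hd : rd2 u v) :
    rd2 u' v' := hu ▸ hv ▸ hd

variable (h : ParSum C) (φ : Fin 2 × ℕ → ℕ) (hφ : Function.Injective φ)

local notation "pa" => phiC φ hφ 0
local notation "pb" => phiC φ hφ 1
local notation "dab" => disjoint_phiC_ranges φ hφ

lemma smul_fobj (u : Minj ℕ) (x y : C) :
    u • Fobj h φ hφ x y = h.add ((u * pa) • x) ((u * pb) • y) := by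
  show u • h.add (pa • x) (pb • y) = _
  rw [h.smul_add u (d12 h φ hφ x y), ← mul_smul, ← mul_smul]

lemma pentagon' (w x y z : C) :
    Fhom h φ hφ (parAssociator h φ hφ w x y) (𝟙 z) ≫
        parAssociator h φ hφ w (Fobj h φ hφ x y) z ≫
        Fhom h φ hφ (𝟙 w) (parAssociator h φ hφ x y z) =
      parAssociator h φ hφ (Fobj h φ hφ w x) y z ≫
        parAssociator h φ hφ w x (Fobj h φ hφ y z) := by
  have A1 : rd2 (pa * pa) (pa * pb) := rd2_lmul dab pa
  have A2 : rd2 (pa * pa) pb := rd2_mul_left dab pa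
  have A3 : rd2 (pa * pb) pb := rd2_mul_left dab pb
  have A4 : rd2 pa (pb * pa) := rd2_mul_right dab pa
  have A5 : rd2 pa (pb * pb) := rd2_mul_right dab pb
  have A6 : rd2 (pb * pa) (pb * pb) := rd2_lmul dab pb
  -- rd4 bundles
  have L1u : rd4 (pa * (pa * pa)) (pa * (pa * pb)) (pa * pb) pb :=
    ⟨rd2_lmul A1 pa, rd2_lmul A2 pa, rd2_mul_left dab (pa * pa),
     rd2_lmul A3 pa, rd2_mul_left dab (pa * pb), A3⟩
  have L1v : rd4 (pa * pa) (pa * (pb * pa)) (pa * (pb * pb)) pb :=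
    ⟨rd2_lmul A4 pa, rd2_lmul A5 pa, A2,
     rd2_lmul A6 pa, rd2_mul_left dab (pb * pa), rd2_mul_left dab (pb * pb)⟩
  have L3u : rd4 pa (pb * (pa * pa)) (pb * (pa * pb)) (pb * pb) :=
    ⟨rd2_mul_right dab (pa * pa), rd2_mul_right dab (pa * pb), A5,
     rd2_lmul A1 pb, rd2_lmul A2 pb, rd2_lmul A3 pb⟩
  have L3v : rd4 pa (pb * pa) (pb * (pb * pa)) (pb * (pb * pb)) :=
    ⟨A4, rd2_mul_right dab (pb * pa), rd2_mul_right dab (pb * pb),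
     rd2_lmul A4 pb, rd2_lmul A5 pb, rd2_lmul A6 pb⟩
  have M2u : rd4 (pa * pa) ((pa * pb) * pa) ((pa * pb) * pb) pb :=
    ⟨rd2_cast rfl (mul_assoc pa pb pa).symm (rd2_lmul A4 pa),
     rd2_cast rfl (mul_assoc pa pb pb).symm (rd2_lmul A5 pa), A2,
     rd2_lmul dab (pa * pb), rd2_mul_left A3 pa, rd2_mul_left A3 pb⟩
  have M2v : rd4 pa ((pb * pa) * pa) ((pb * pa) * pb) (pb * pb) :=
    ⟨rd2_cast rfl (mul_assoc pb pa pa).symm (rd2_mul_right dab (pa * pa)),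
     rd2_cast rfl (mul_assoc pb pa pb).symm (rd2_mul_right dab (pa * pb)), A5,
     rd2_lmul dab (pb * pa),
     rd2_cast (mul_assoc pb pa pa).symm rfl (rd2_lmul A2 pb),
     rd2_cast (mul_assoc pb pa pb).symm rfl (rd2_lmul A3 pb)⟩
  have M4u : rd4 ((pa * pa) * pa) ((pa * pa) * pb) (pa * pb) pb :=
    ⟨rd2_lmul dab (pa * pa),
     rd2_cast (mul_assoc pa pa pa).symm rfl (rd2_lmul A2 pa),
     rd2_mul_left A2 pa,
     rd2_cast (mul_assoc pa pa pb).symm rfl (rd2_lmul A3 pa),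
     rd2_mul_left A2 pb, A3⟩
  have M4v : rd4 (pa * pa) (pa * pb) (pb * pa) (pb * pb) :=
    ⟨A1, rd2_mul dab pa pa, rd2_mul dab pa pb, rd2_mul dab pb pa, rd2_mul dab pb pb, A6⟩
  have M5v : rd4 pa (pb * pa) ((pb * pb) * pa) ((pb * pb) * pb) :=
    ⟨A4, rd2_cast rfl (mul_assoc pb pb pa).symm (rd2_mul_right dab (pb * pa)),
     rd2_cast rfl (mul_assoc pb pb pb).symm (rd2_mul_right dab (pb * pb)),
     rd2_cast rfl (mul_assoc pb pb pa).symm (rd2_lmul A4 pb),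
     rd2_cast rfl (mul_assoc pb pb pb).symm (rd2_lmul A5 pb),
     rd2_lmul dab (pb * pb)⟩
  -- object flattenings
  have M2s : Fobj h φ hφ (Fobj h φ hφ w (Fobj h φ hφ x y)) z =
      h.add ((pa * pa) • w) (h.add (((pa * pb) * pa) • x)
        (h.add (((pa * pb) * pb) • y) (pb • z))) :=
    (srcEq3 h φ hφ w (Fobj h φ hφ x y) z).trans (by
      rw [smul_fobj h φ hφ (pa * pb) x y,
        h.add_assoc' (ds2 h (rd2_lmul dab (pa * pb)) x y)
          (ds2 h (rd2_mul_left A3 pb) y z) (ds2 h (rd2_mul_left A3 pa) x z)])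
  have M1t : Fobj h φ hφ (Fobj h φ hφ w (Fobj h φ hφ x y)) z =
      h.add ((pa * pa) • w) (h.add ((pa * (pb * pa)) • x)
        (h.add ((pa * (pb * pb)) • y) (pb • z))) :=
    M2s.trans (by rw [mul_assoc pa pb pa, mul_assoc pa pb pb])
  have M2t : Fobj h φ hφ w (Fobj h φ hφ (Fobj h φ hφ x y) z) =
      h.add (pa • w) (h.add (((pb * pa) * pa) • x)
        (h.add (((pb * pa) * pb) • y) ((pb * pb) • z))) :=
    (assocTgt_eq h φ hφ w (Fobj h φ hφ x y) z).trans (by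
      rw [smul_fobj h φ hφ (pb * pa) x y,
        h.add_assoc' (ds2 h (rd2_lmul dab (pb * pa)) x y)
          (ds2 h (rd2_cast (mul_assoc pb pa pb).symm rfl (rd2_lmul A3 pb)) y z)
          (ds2 h (rd2_cast (mul_assoc pb pa pa).symm rfl (rd2_lmul A2 pb)) x z)])
  have M3s : Fobj h φ hφ w (Fobj h φ hφ (Fobj h φ hφ x y) z) =
      h.add (pa • w) (h.add ((pb * (pa * pa)) • x)
        (h.add ((pb * (pa * pb)) • y) ((pb * pb) • z))) :=
    M2t.trans (by rw [mul_assoc pb pa pa, mul_assoc pb pa pb])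
  have S0eq' : Fobj h φ hφ (Fobj h φ hφ (Fobj h φ hφ w x) y) z =
      h.add (((pa * pa) * pa) • w) (h.add (((pa * pa) * pb) • x)
        (h.add ((pa * pb) • y) (pb • z))) :=
    (srcEq3 h φ hφ (Fobj h φ hφ w x) y z).trans (by
      rw [smul_fobj h φ hφ (pa * pa) w x,
        h.add_assoc' (ds2 h (rd2_lmul dab (pa * pa)) w x)
          (ds12 h M4u.2.2.2.1 M4u.2.2.2.2.1 A3 x y z)
          (ds12 h M4u.2.1 M4u.2.2.1 A3 w y z)])
  have S0eq : Fobj h φ hφ (Fobj h φ hφ (Fobj h φ hφ w x) y) z =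
      h.add ((pa * (pa * pa)) • w) (h.add ((pa * (pa * pb)) • x)
        (h.add ((pa * pb) • y) (pb • z))) :=
    S0eq'.trans (by rw [mul_assoc pa pa pa, mul_assoc pa pa pb])
  have Tt' : Fobj h φ hφ w (Fobj h φ hφ x (Fobj h φ hφ y z)) =
      h.add (pa • w) (h.add ((pb * pa) • x)
        (h.add (((pb * pb) * pa) • y) (((pb * pb) * pb) • z))) :=
    (assocTgt_eq h φ hφ w x (Fobj h φ hφ y z)).trans (by
      rw [smul_fobj h φ hφ (pb * pb) y z])
  have Tt : Fobj h φ hφ w (Fobj h φ hφ x (Fobj h φ hφ y z)) =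
      h.add (pa • w) (h.add ((pb * pa) • x)
        (h.add ((pb * (pb * pa)) • y) ((pb * (pb * pb)) • z))) :=
    Tt'.trans (by rw [mul_assoc pb pb pa, mul_assoc pb pb pb])
  have M4t : Fobj h φ hφ (Fobj h φ hφ w x) (Fobj h φ hφ y z) =
      h.add ((pa * pa) • w) (h.add ((pa * pb) • x)
        (h.add ((pb * pa) • y) ((pb * pb) • z))) := by
    show h.add (pa • Fobj h φ hφ w x) (pb • Fobj h φ hφ y z) = _
    rw [smul_fobj h φ hφ pa w x, smul_fobj h φ hφ pb y z,
      h.add_assoc' (ds2 h A1 w x)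
        (ds12 h (rd2_mul dab pb pa) (rd2_mul dab pb pb) A6 x y z)
        (ds12 h (rd2_mul dab pa pa) (rd2_mul dab pa pb) A6 w y z)]
  -- the five factors in cf4 form
  have M1 : Fhom h φ hφ (parAssociator h φ hφ w x y) (𝟙 z) =
      cf4 h (pa * (pa * pa)) (pa * pa) (pa * (pa * pb)) (pa * (pb * pa))
        (pa * pb) (pa * (pb * pb)) pb pb w x y z L1u L1v S0eq M1t := by
    rw [Fhom_gsum h φ hφ, assoc_cf3 h φ hφ w x y,
      act_cf3 h pa (pa * pa) pa (pa * pb) (pb * pa) pb (pb * pb) w x y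
        ⟨A1, A2, A3⟩ ⟨A4, A5, A6⟩
        ⟨rd2_lmul A1 pa, rd2_lmul A2 pa, rd2_lmul A3 pa⟩
        ⟨rd2_lmul A4 pa, rd2_lmul A5 pa, rd2_lmul A6 pa⟩,
      MCat.act_id, id_gtw h pb z,
      cf3_pres,
      gsum_conj_left h _ _ (ds31 h L1u w x y z) (ds31 h L1v w x y z)]
    exact nest31 h (pa * (pa * pa)) (pa * pa) (pa * (pa * pb)) (pa * (pb * pa))
      (pa * pb) (pa * (pb * pb)) pb pb w x y z L1u L1v
      ⟨L1u.1, L1u.2.1, L1u.2.2.2.1⟩ ⟨L1v.1, L1v.2.1, L1v.2.2.2.1⟩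
      _ _ _ _ S0eq M1t
  have M2 : parAssociator h φ hφ w (Fobj h φ hφ x y) z =
      cf4 h (pa * pa) pa ((pa * pb) * pa) ((pb * pa) * pa) ((pa * pb) * pb)
        ((pb * pa) * pb) pb (pb * pb) w x y z M2u M2v M2s M2t := by
    rw [assoc_cf3 h φ hφ w (Fobj h φ hφ x y) z]
    exact cf3_mid h (pa * pa) pa (pa * pb) (pb * pa) pb (pb * pb) pa pb w x y z dab
      ⟨A1, A2, A3⟩ ⟨A4, A5, A6⟩ M2u M2v
      (srcEq3 h φ hφ w (Fobj h φ hφ x y) z)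
      (assocTgt_eq h φ hφ w (Fobj h φ hφ x y) z) M2s M2t
  have M2' : parAssociator h φ hφ w (Fobj h φ hφ x y) z =
      cf4 h (pa * pa) pa (pa * (pb * pa)) (pb * (pa * pa)) (pa * (pb * pb))
        (pb * (pa * pb)) pb (pb * pb) w x y z L1v L3u M1t M3s := by
    rw [M2]
    exact cf4_cast h rfl rfl (mul_assoc pa pb pa) (mul_assoc pb pa pa)
      (mul_assoc pa pb pb) (mul_assoc pb pa pb) rfl rfl w x y z M2u M2v L1v L3u
      M2s M2t M1t M3s
  have M3 : Fhom h φ hφ (𝟙 w) (parAssociator h φ hφ x y z) =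
      cf4 h pa pa (pb * (pa * pa)) (pb * pa) (pb * (pa * pb)) (pb * (pb * pa))
        (pb * pb) (pb * (pb * pb)) w x y z L3u L3v M3s Tt := by
    rw [Fhom_gsum h φ hφ, assoc_cf3 h φ hφ x y z,
      act_cf3 h pb (pa * pa) pa (pa * pb) (pb * pa) pb (pb * pb) x y z
        ⟨A1, A2, A3⟩ ⟨A4, A5, A6⟩
        ⟨rd2_lmul A1 pb, rd2_lmul A2 pb, rd2_lmul A3 pb⟩
        ⟨rd2_lmul A4 pb, rd2_lmul A5 pb, rd2_lmul A6 pb⟩,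
      MCat.act_id, id_gtw h pa w,
      cf3_pres,
      gsum_conj_right h _ _ (ds13 h L3u w x y z) (ds13 h L3v w x y z)]
    rfl
  have M4 : parAssociator h φ hφ (Fobj h φ hφ w x) y z =
      cf4 h ((pa * pa) * pa) (pa * pa) ((pa * pa) * pb) (pa * pb) (pa * pb)
        (pb * pa) pb (pb * pb) w x y z M4u M4v S0eq' M4t := by
    rw [assoc_cf3 h φ hφ (Fobj h φ hφ w x) y z]
    exact cf3_first h (pa * pa) pa (pa * pb) (pb * pa) pb (pb * pb) pa pb w x y z dab
      ⟨A1, A2, A3⟩ ⟨A4, A5, A6⟩ M4u M4v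
      (srcEq3 h φ hφ (Fobj h φ hφ w x) y z)
      (assocTgt_eq h φ hφ (Fobj h φ hφ w x) y z) S0eq' M4t
  have M5 : parAssociator h φ hφ w x (Fobj h φ hφ y z) =
      cf4 h (pa * pa) pa (pa * pb) (pb * pa) (pb * pa) ((pb * pb) * pa) (pb * pb)
        ((pb * pb) * pb) w x y z M4v M5v M4t Tt' := by
    rw [assoc_cf3 h φ hφ w x (Fobj h φ hφ y z)]
    exact cf3_last h (pa * pa) pa (pa * pb) (pb * pa) pb (pb * pb) pa pb w x y z dab
      ⟨A1, A2, A3⟩ ⟨A4, A5, A6⟩ M4v M5v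
      (srcEq3 h φ hφ w x (Fobj h φ hφ y z))
      (assocTgt_eq h φ hφ w x (Fobj h φ hφ y z)) M4t Tt'
  rw [M1, M2', M3, M4, M5, cf4_comp, cf4_comp, cf4_comp]
  exact cf4_cast h (mul_assoc pa pa pa) rfl (mul_assoc pa pa pb) rfl rfl
    (mul_assoc pb pb pa) rfl (mul_assoc pb pb pb) w x y z M4u M5v L1u L3v
    S0eq' Tt' S0eq Tt

end Pentagon

/-- For a parsummable category `C` and an injection `φ : {1,2} × ℕ → ℕ`, the functor `φ_*`
together with the unit object `0`, the associativity isomorphisms `α`, the symmetry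
isomorphisms `τ` and the unit isomorphisms makes the underlying category of `C` a symmetric
monoidal category: the pentagon axiom, the unit (triangle) axiom and the hexagon axiom hold,
and `τ_{y,x} ∘ τ_{x,y} = id`. -/
theorem stmt2 (C : Type*) [Category C] [MulAction (Minj ℕ) C] (h : ParSum C)
    (φ : Fin 2 × ℕ → ℕ) (hφ : Function.Injective φ) :
    -- pentagon coherence
    (∀ w x y z : C,
      Fhom h φ hφ (parAssociator h φ hφ w x y) (𝟙 z) ≫
          parAssociator h φ hφ w (Fobj h φ hφ x y) z ≫
          Fhom h φ hφ (𝟙 w) (parAssociator h φ hφ x y z) =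
        parAssociator h φ hφ (Fobj h φ hφ w x) y z ≫ parAssociator h φ hφ w x (Fobj h φ hφ y z)) ∧
    -- unit coherence (triangle)
    (∀ x y : C,
      Fhom h φ hφ (rightUnitor h φ hφ x) (𝟙 y) ≫ parAssociator h φ hφ x h.zero y =
        Fhom h φ hφ (𝟙 x) (leftUnitor h φ hφ y)) ∧
    -- hexagon relating associativity and symmetry
    (∀ x y z : C,
      parAssociator h φ hφ x y z ≫ braiding h φ hφ x (Fobj h φ hφ y z) ≫
          parAssociator h φ hφ y z x =
        Fhom h φ hφ (braiding h φ hφ x y) (𝟙 z) ≫ parAssociator h φ hφ y x z ≫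
          Fhom h φ hφ (𝟙 y) (braiding h φ hφ x z)) ∧
    -- the symmetry is an involution
    (∀ x y : C, braiding h φ hφ x y ≫ braiding h φ hφ y x = 𝟙 (Fobj h φ hφ x y)) :=
  ⟨fun w x y z => pentagon' h φ hφ w x y z,
   fun x y => triangle' h φ hφ x y,
   fun x y z => hexagon' h φ hφ x y z,
   fun x y => braid_braid h φ hφ x y⟩
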